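/- arXiv:1408.3692 — 6 statements merged into one kernel-verified Lean document; each statement's English description precedes it below -/
import Mathlib

section
/- Every stopping strategy of Type I is also a stopping strategy of Type II; i.e., if ρ : 𝒯 → 𝒯 satisfies: for all σ₁,σ₂ ∈ 𝒯, either (ρ(σ₁)=ρ(σ₂) and ρ(σ₁) ≤ σ₁∧σ₂) or ρ(σ₁)∧ρ(σ₂) > σ₁∧σ₂, then it satisfies: for all σ₁,σ₂ ∈ 𝒯, either (ρ(σ₁)=ρ(σ₂) and ρ(σ₁) < σ₁∧σ₂) or ρ(σ₁)∧ρ(σ₂) ≥ σ₁∧σ₂. -/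
open MeasureTheory

/-- Every stopping strategy of Type I is also a stopping strategy of Type II. -/
theorem stmt_1 {Ω : Type*} {m : MeasurableSpace Ω} (ℱ : Filtration ℕ m) (T : ℕ)
    (𝒯 : Set (Ω → ℕ))
    (h𝒯 : 𝒯 = {σ | IsStoppingTime ℱ (fun ω => (σ ω : WithTop ℕ)) ∧ ∀ ω, σ ω ≤ T})
    (ρ : (Ω → ℕ) → (Ω → ℕ))
    (hmap : ∀ σ ∈ 𝒯, ρ σ ∈ 𝒯)
    (hI : ∀ σ₁ ∈ 𝒯, ∀ σ₂ ∈ 𝒯, ∀ ω,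
      (ρ σ₁ ω = ρ σ₂ ω ∧ ρ σ₁ ω ≤ min (σ₁ ω) (σ₂ ω)) ∨
        min (σ₁ ω) (σ₂ ω) < min (ρ σ₁ ω) (ρ σ₂ ω)) :
    ∀ σ₁ ∈ 𝒯, ∀ σ₂ ∈ 𝒯, ∀ ω,
      (ρ σ₁ ω = ρ σ₂ ω ∧ ρ σ₁ ω < min (σ₁ ω) (σ₂ ω)) ∨
        min (σ₁ ω) (σ₂ ω) ≤ min (ρ σ₁ ω) (ρ σ₂ ω) := by
  intro σ₁ h1 σ₂ h2 ω
  rcases hI σ₁ h1 σ₂ h2 ω with ⟨heq, hle⟩ | hlt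
  · rcases lt_or_eq_of_le hle with h | h
    · exact Or.inl ⟨heq, h⟩
    · right; omega
  · exact Or.inr hlt.le
end

section
/- Let ρ_d be a stopping time, and for each stopping time τ let ρ_u(τ) be a stopping time with ρ_u(τ) ≥ τ, such that ρ_u(τ) depends on τ only through the event structure as in the composed family (i.e., ρ_u(τ)(ω)=ρ_u(τ(ω))(ω) for a family ρ_u(i) ≥ i). Then the map ρ*(τ) := ρ_d·1_{τ > ρ_d} + ρ_u(τ)·1_{τ ≤ ρ_d} is a stopping strategy of Type II: for any stopping times τ₁, τ₂, either ρ*(τ₁)=ρ*(τ₂) < τ₁∧τ₂ or ρ*(τ₁)∧ρ*(τ₂) ≥ τ₁∧τ₂. -/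
open MeasureTheory

/-- The map `ρ*(τ) := ρ_d·1_{τ > ρ_d} + ρ_u(τ)·1_{τ ≤ ρ_d}` maps stopping times to
stopping times and is a stopping strategy of Type II. -/
theorem stmt_6 {Ω : Type*} {m : MeasurableSpace Ω} (ℱ : Filtration ℕ m) (T : ℕ)
    (ρd : Ω → ℕ) (hρd : IsStoppingTime ℱ (fun ω => (ρd ω : WithTop ℕ))) (hρdT : ∀ ω, ρd ω ≤ T)
    (ρu : ℕ → Ω → ℕ)
    (hρu : ∀ i ≤ T, IsStoppingTime ℱ (fun ω => (ρu i ω : WithTop ℕ)))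
    (hρuge : ∀ i ≤ T, ∀ ω, i ≤ ρu i ω)
    (hρuT : ∀ i ≤ T, ∀ ω, ρu i ω ≤ T)
    (ρstar : (Ω → ℕ) → Ω → ℕ)
    (hρstar : ∀ τ ω, ρstar τ ω = if ρd ω < τ ω then ρd ω else ρu (τ ω) ω) :
    -- ρ*(τ) is a stopping time for every stopping time τ
    (∀ τ : Ω → ℕ, IsStoppingTime ℱ (fun ω => (τ ω : WithTop ℕ)) → (∀ ω, τ ω ≤ T) →
      IsStoppingTime ℱ (fun ω => (ρstar τ ω : WithTop ℕ)) ∧ ∀ ω, ρstar τ ω ≤ T) ∧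
    -- non-anticipativity of Type II
    (∀ τ₁ : Ω → ℕ, IsStoppingTime ℱ (fun ω => (τ₁ ω : WithTop ℕ)) → (∀ ω, τ₁ ω ≤ T) →
     ∀ τ₂ : Ω → ℕ, IsStoppingTime ℱ (fun ω => (τ₂ ω : WithTop ℕ)) → (∀ ω, τ₂ ω ≤ T) →
      ∀ ω, (ρstar τ₁ ω = ρstar τ₂ ω ∧ ρstar τ₁ ω < min (τ₁ ω) (τ₂ ω)) ∨
        min (τ₁ ω) (τ₂ ω) ≤ min (ρstar τ₁ ω) (ρstar τ₂ ω)) := by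
  constructor
  · intro τ hτ hτT
    constructor
    · intro t
      have hset : {ω | ρstar τ ω ≤ t} =
          (⋃ j < t + 1, {ω | ρd ω = j} ∩ {ω | τ ω ≤ j}ᶜ) ∪
          (⋃ i < min t T + 1,
            {ω | τ ω = i} ∩ {ω | ρd ω < i}ᶜ ∩ {ω | ρu i ω ≤ t}) := by
        ext ω
        simp only [Set.mem_setOf_eq, Set.mem_union, Set.mem_iUnion,
          Set.mem_inter_iff, Set.mem_compl_iff, hρstar]
        constructor
        · intro h
          by_cases hc : ρd ω < τ ω
          · rw [if_pos hc] at h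
            exact Or.inl ⟨ρd ω, Nat.lt_succ_of_le h, rfl, not_le.mpr hc⟩
          · rw [if_neg hc] at h
            have hle : τ ω ≤ ρu (τ ω) ω := hρuge (τ ω) (hτT ω) ω
            refine Or.inr ⟨τ ω, Nat.lt_succ_of_le (le_min (hle.trans h) (hτT ω)),
              ⟨rfl, hc⟩, h⟩
        · rintro (⟨j, hj, hje, hjτ⟩ | ⟨i, hi, ⟨hτi, hρi⟩, hρui⟩)
          · have hc : ρd ω < τ ω := by
              rw [hje]; exact not_le.mp hjτ
            rw [if_pos hc, hje]; omega
          · have hc : ¬ ρd ω < τ ω := by rw [hτi]; exact hρi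
            rw [if_neg hc, hτi]; exact hρui
        
      suffices hms : MeasurableSet[ℱ t] {ω | ρstar τ ω ≤ t} by
        convert hms using 1; ext ω; simp
      rw [hset]
      refine MeasurableSet.union ?_ ?_
      · refine MeasurableSet.biUnion (Set.to_countable _) fun j hj => ?_
        have hjt : j ≤ t := Nat.lt_succ_iff.mp hj
        have A : MeasurableSet[ℱ j] {ω | ρd ω = j} := by
          have := hρd.measurableSet_eq j; simpa using this
        have B : MeasurableSet[ℱ j] {ω | τ ω ≤ j} := by
          have := hτ j; simpa using this
        exact (ℱ.mono hjt _ A).inter (ℱ.mono hjt _ B).compl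
      · refine MeasurableSet.biUnion (Set.to_countable _) fun i hi => ?_
        have hit : i ≤ t ∧ i ≤ T := le_min_iff.mp (Nat.lt_succ_iff.mp hi)
        have A : MeasurableSet[ℱ i] {ω | τ ω = i} := by
          have := hτ.measurableSet_eq i; simpa using this
        have B : MeasurableSet[ℱ i] {ω | ρd ω < i} := by
          have := hρd.measurableSet_lt i; simpa using this
        have C : MeasurableSet[ℱ t] {ω | ρu i ω ≤ t} := by
          have := (hρu i hit.2) t; simpa using this
        exact ((ℱ.mono hit.1 _ A).inter
          (ℱ.mono hit.1 _ B).compl).inter C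
    · intro ω
      rw [hρstar]
      split
      · exact hρdT ω
      · exact hρuT (τ ω) (hτT ω) ω
  · intro τ₁ hτ₁ hT₁ τ₂ hτ₂ hT₂ ω
    rw [hρstar, hρstar]
    by_cases h1 : ρd ω < τ₁ ω <;> by_cases h2 : ρd ω < τ₂ ω
    · rw [if_pos h1, if_pos h2]
      exact Or.inl ⟨rfl, lt_min h1 h2⟩
    · rw [if_pos h1, if_neg h2]
      exact Or.inr (le_min ((min_le_right _ _).trans (not_lt.mp h2))
        ((min_le_right _ _).trans (hρuge _ (hT₂ ω) ω)))
    · rw [if_neg h1, if_pos h2]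
      exact Or.inr (le_min ((min_le_left _ _).trans (hρuge _ (hT₁ ω) ω))
        ((min_le_left _ _).trans (not_lt.mp h1)))
    · rw [if_neg h1, if_neg h2]
      exact Or.inr (le_min ((min_le_left _ _).trans (hρuge _ (hT₁ ω) ω))
        ((min_le_right _ _).trans (hρuge _ (hT₂ ω) ω)))
end

section
/- With ρ*, τ* defined by ρ*(τ)=ρ_d·1_{τ>ρ_d}+ρ_u(τ)·1_{τ≤ρ_d} and τ*(ρ)=τ_d·1_{τ_d ≤ ρ(τ_d)}+τ_u(ρ(τ_d))·1_{τ_d > ρ(τ_d)}, where ρ_u(σ) ≥ σ and τ_u(t) ≥ t+1 for t<T, the composed optimizers satisfy: ρ*(τ*(ρ*)) = ρ_d·1_{τ_d>ρ_d} + ρ_u(τ_d)·1_{τ_d≤ρ_d} and τ*(ρ*) = τ_d·1_{τ_d≤ρ_d} + τ_u(ρ_d)·1_{τ_d>ρ_d} (almost surely, pointwise on Ω). -/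
open MeasureTheory

/-- The composed optimizers satisfy
`ρ*(τ*(ρ*)) = ρ_d·1_{τ_d>ρ_d} + ρ_u(τ_d)·1_{τ_d≤ρ_d}` and
`τ*(ρ*) = τ_d·1_{τ_d≤ρ_d} + τ_u(ρ_d)·1_{τ_d>ρ_d}`, pointwise on `Ω`. -/
theorem stmt_8 {Ω : Type*} {m : MeasurableSpace Ω} (ℱ : Filtration ℕ m) (T : ℕ)
    (ρd τd : Ω → ℕ)
    (hρd : IsStoppingTime ℱ (fun ω => (ρd ω : WithTop ℕ))) (hρdT : ∀ ω, ρd ω ≤ T)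
    (hτd : IsStoppingTime ℱ (fun ω => (τd ω : WithTop ℕ))) (hτdT : ∀ ω, τd ω ≤ T)
    (ρu τu : ℕ → Ω → ℕ)
    (hρu : ∀ i ≤ T, IsStoppingTime ℱ (fun ω => (ρu i ω : WithTop ℕ)))
    (hρuge : ∀ i ≤ T, ∀ ω, i ≤ ρu i ω)
    (hτu : ∀ i ≤ T, IsStoppingTime ℱ (fun ω => (τu i ω : WithTop ℕ)))
    (hτuge : ∀ i, i < T → ∀ ω, i + 1 ≤ τu i ω)
    (hτuT : ∀ ω, τu T ω = T)
    (ρstar : (Ω → ℕ) → Ω → ℕ)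
    (hρstar : ∀ τ ω, ρstar τ ω = if ρd ω < τ ω then ρd ω else ρu (τ ω) ω)
    (τstar : ((Ω → ℕ) → Ω → ℕ) → Ω → ℕ)
    (hτstar : ∀ ρ ω, τstar ρ ω = if τd ω ≤ ρ τd ω then τd ω else τu (ρ τd ω) ω) :
    ∀ ω, ρstar (τstar ρstar) ω = (if ρd ω < τd ω then ρd ω else ρu (τd ω) ω) ∧
      τstar ρstar ω = (if τd ω ≤ ρd ω then τd ω else τu (ρd ω) ω) := by
  intro ω
  have hτstar' : τstar ρstar ω = (if τd ω ≤ ρd ω then τd ω else τu (ρd ω) ω) := by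
    rw [hτstar, hρstar]
    by_cases h : ρd ω < τd ω
    · rw [if_pos h, if_neg (not_le.2 h)]
    · rw [if_neg h, if_pos (hρuge (τd ω) (hτdT ω) ω), if_pos (not_lt.1 h)]
  refine ⟨?_, hτstar'⟩
  rw [hρstar, hτstar']
  by_cases h : ρd ω < τd ω
  · have hT : ρd ω < T := lt_of_lt_of_le h (hτdT ω)
    rw [if_neg (not_le.2 h), if_pos (lt_of_lt_of_le (Nat.lt_succ_self _) (hτuge (ρd ω) hT ω)), if_pos h]
  · rw [if_pos (not_lt.1 h), if_neg h]
end

section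
/- In the Dynkin game with payoff processes V¹ ≤ V² (adapted, bounded, discrete time {0,...,T}, V¹_T = V²_T), the upper and lower values coincide: inf_{ρ∈𝒯} sup_{τ∈𝒯} E[V¹_τ 1_{τ≤ρ} + V²_ρ 1_{τ>ρ}] = sup_{τ∈𝒯} inf_{ρ∈𝒯} E[V¹_τ 1_{τ≤ρ} + V²_ρ 1_{τ>ρ}], and a saddle point is given by ρ_d := inf{s ≥ 0 : V_s = V²_s} and τ_d := inf{s ≥ 0 : V_s = V¹_s}, where V_t is the common conditional value process defined by backward induction V_T = V¹_T, V_t = min( V²_t, max(V¹_t, E[V_{t+1}|ℱ_t]) ). -/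
open MeasureTheory

set_option linter.unusedSectionVars false
namespace Stmt12Aux

variable {Ω : Type*} {m : MeasurableSpace Ω}

/-- Backward-induction value process, indexed by "time to go": `W k` is the value at time `T-k`. -/
noncomputable def W (μ : Measure Ω) (ℱ : Filtration ℕ m) (V1 V2 : ℕ → Ω → ℝ) (T : ℕ) :
    ℕ → Ω → ℝ
  | 0 => V1 T
  | (k+1) => fun ω => min (V2 (T - (k+1)) ω) (max (V1 (T - (k+1)) ω)
      ((μ[W μ ℱ V1 V2 T k | ℱ (T - (k+1))]) ω))

variable {μ : Measure Ω} [IsProbabilityMeasure μ] {ℱ : Filtration ℕ m} {T : ℕ}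
  {V1 V2 : ℕ → Ω → ℝ}

theorem W_meas (hadp1 : ∀ t, StronglyMeasurable[ℱ t] (V1 t))
    (hadp2 : ∀ t, StronglyMeasurable[ℱ t] (V2 t)) (k : ℕ) :
    StronglyMeasurable[ℱ (T - k)] (W μ ℱ V1 V2 T k) := by
  cases k with
  | zero => exact hadp1 T
  | succ k =>
    exact (((hadp2 _).measurable.min (((hadp1 _).measurable.max
      (stronglyMeasurable_condExp.measurable)))) ).stronglyMeasurable

theorem W_bdd {C : ℝ} (hC : 0 ≤ C)
    (hadp1 : ∀ t, StronglyMeasurable[ℱ t] (V1 t))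
    (hadp2 : ∀ t, StronglyMeasurable[ℱ t] (V2 t))
    (hb : ∀ t ω, |V1 t ω| ≤ C ∧ |V2 t ω| ≤ C) (k : ℕ) :
    (∀ᵐ ω ∂μ, |W μ ℱ V1 V2 T k ω| ≤ C) ∧ Integrable (W μ ℱ V1 V2 T k) μ := by
  induction k with
  | zero =>
    refine ⟨Filter.Eventually.of_forall fun ω => (hb T ω).1, ?_⟩
    exact Integrable.mono' (integrable_const C)
      (((hadp1 T).mono (ℱ.le T)).aestronglyMeasurable)
      (Filter.Eventually.of_forall fun ω => by
        simpa [W, Real.norm_eq_abs] using (hb T ω).1)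
  | succ k ih =>
    have hcond : ∀ᵐ ω ∂μ, |(μ[W μ ℱ V1 V2 T k | ℱ (T - (k+1))]) ω| ≤ C := by
      have := ae_bdd_condExp_of_ae_bdd (μ := μ) (R := ⟨C, hC⟩) (m := ℱ (T - (k+1)))
        (f := W μ ℱ V1 V2 T k) (by exact ih.1)
      exact this
    have hbd : ∀ᵐ ω ∂μ, |W μ ℱ V1 V2 T (k+1) ω| ≤ C := by
      filter_upwards [hcond] with ω hω
      have hA := abs_le.mp (hb (T - (k+1)) ω).1
      have hB := abs_le.mp (hb (T - (k+1)) ω).2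
      have hE := abs_le.mp hω
      show |min (V2 (T - (k+1)) ω) (max (V1 (T - (k+1)) ω) _)| ≤ C
      refine abs_le.mpr ⟨le_min hB.1 (le_trans hA.1 (le_max_left _ _)),
        le_trans (min_le_left _ _) hB.2⟩
    refine ⟨hbd, ?_⟩
    exact Integrable.mono' (integrable_const C)
      (((W_meas hadp1 hadp2 (k+1)).mono (ℱ.le _)).aestronglyMeasurable)
      (by filter_upwards [hbd] with ω h using by simpa [Real.norm_eq_abs] using h)

theorem W_rec (t : ℕ) (ht : t < T) :
    W μ ℱ V1 V2 T (T - t) = fun ω =>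
      min (V2 t ω) (max (V1 t ω) ((μ[W μ ℱ V1 V2 T (T - (t+1)) | ℱ t]) ω)) := by
  have h1 : T - t = (T - (t+1)) + 1 := by omega
  have h2 : T - ((T - (t+1)) + 1) = t := by omega
  rw [h1]
  show (fun ω => min (V2 (T - ((T - (t+1)) + 1)) ω) (max (V1 (T - ((T - (t+1)) + 1)) ω)
      ((μ[W μ ℱ V1 V2 T (T - (t+1)) | ℱ (T - ((T - (t+1)) + 1))]) ω))) = _
  rw [h2]

theorem W_ae_eq {V : ℕ → Ω → ℝ}
    (hVT : V T =ᵐ[μ] V1 T)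
    (hVrec : ∀ t < T,
      V t =ᵐ[μ] fun ω => min (V2 t ω) (max (V1 t ω) ((μ[V (t + 1) | ℱ t]) ω)))
    (t : ℕ) (ht : t ≤ T) : V t =ᵐ[μ] W μ ℱ V1 V2 T (T - t) := by
  have key : ∀ k, k ≤ T → V (T - k) =ᵐ[μ] W μ ℱ V1 V2 T k := by
    intro k
    induction k with
    | zero => intro _; simpa [W] using hVT
    | succ k ih =>
      intro hk
      have hk' : k ≤ T := by omega
      have hlt : T - (k+1) < T := by omega
      have h1 : T - (k+1) + 1 = T - k := by omega
      have ihc : μ[V (T - (k+1) + 1) | ℱ (T - (k+1))]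
          =ᵐ[μ] μ[W μ ℱ V1 V2 T k | ℱ (T - (k+1))] := by
        rw [h1]; exact condExp_congr_ae (ih hk')
      filter_upwards [hVrec (T - (k+1)) hlt, ihc] with ω h2 h3
      rw [h2]
      show _ = min (V2 (T - (k+1)) ω) (max (V1 (T - (k+1)) ω) _)
      rw [h3]
  have h := key (T - t) (by omega)
  rwa [show T - (T - t) = t by omega] at h

theorem W_between (h12 : ∀ t, V1 t ≤ᵐ[μ] V2 t) (hT12 : V1 T =ᵐ[μ] V2 T)
    (t : ℕ) (ht : t ≤ T) :
    ∀ᵐ ω ∂μ, V1 t ω ≤ W μ ℱ V1 V2 T (T - t) ω ∧ W μ ℱ V1 V2 T (T - t) ω ≤ V2 t ω := by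
  rcases eq_or_lt_of_le ht with rfl | hlt
  · filter_upwards [hT12] with ω hω
    simp only [Nat.sub_self]
    exact ⟨le_refl _, le_of_eq hω⟩
  · rw [W_rec t hlt]
    filter_upwards [h12 t] with ω hω
    exact ⟨le_min hω (le_max_left _ _), min_le_left _ _⟩

theorem W_super (t : ℕ) (ht : t < T) (ω : Ω)
    (h : W μ ℱ V1 V2 T (T - t) ω < V2 t ω) :
    (μ[W μ ℱ V1 V2 T (T - (t+1)) | ℱ t]) ω ≤ W μ ℱ V1 V2 T (T - t) ω := by
  rw [congrFun (W_rec t ht) ω] at h ⊢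
  rcases min_cases (V2 t ω) (max (V1 t ω) ((μ[W μ ℱ V1 V2 T (T - (t+1)) | ℱ t]) ω)) with
    ⟨he, hle⟩ | ⟨he, _⟩
  · exact absurd (he ▸ h) (lt_irrefl _)
  · simp only [he]
    exact le_max_right _ _

theorem W_sub (t : ℕ) (ht : t < T) (ω : Ω)
    (h : V1 t ω < W μ ℱ V1 V2 T (T - t) ω) :
    W μ ℱ V1 V2 T (T - t) ω ≤ (μ[W μ ℱ V1 V2 T (T - (t+1)) | ℱ t]) ω := by
  rw [congrFun (W_rec t ht) ω] at h ⊢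
  have hmax : max (V1 t ω) ((μ[W μ ℱ V1 V2 T (T - (t+1)) | ℱ t]) ω)
      = (μ[W μ ℱ V1 V2 T (T - (t+1)) | ℱ t]) ω := by
    rcases max_cases (V1 t ω) ((μ[W μ ℱ V1 V2 T (T - (t+1)) | ℱ t]) ω) with ⟨he, _⟩ | ⟨he, _⟩
    · rw [he] at h
      exact absurd (lt_of_lt_of_le h (min_le_right _ _)) (lt_irrefl _)
    · exact he
  rw [hmax]
  exact min_le_right _ _

/-- First hitting time of `{W = G}`, truncated at `T`. -/
noncomputable def hitT (μ : Measure Ω) (ℱ : Filtration ℕ m) (V1 V2 : ℕ → Ω → ℝ) (T : ℕ)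
    (G : ℕ → Ω → ℝ) : Ω → ℕ :=
  fun ω => sInf {s | W μ ℱ V1 V2 T (T - s) ω = G s ω ∨ T ≤ s}

theorem hitT_le {G : ℕ → Ω → ℝ} (ω : Ω) : hitT μ ℱ V1 V2 T G ω ≤ T :=
  Nat.sInf_le (Or.inr le_rfl)

theorem hitT_mem {G : ℕ → Ω → ℝ} (ω : Ω) :
    W μ ℱ V1 V2 T (T - hitT μ ℱ V1 V2 T G ω) ω = G (hitT μ ℱ V1 V2 T G ω) ω ∨
      hitT μ ℱ V1 V2 T G ω = T := by
  have h := Nat.sInf_mem (⟨T, Or.inr le_rfl⟩ :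
    {s | W μ ℱ V1 V2 T (T - s) ω = G s ω ∨ T ≤ s}.Nonempty)
  rcases h with h | h
  · exact Or.inl h
  · exact Or.inr (le_antisymm (hitT_le ω) h)

theorem hitT_not {G : ℕ → Ω → ℝ} (ω : Ω) (s : ℕ) (hs : s < hitT μ ℱ V1 V2 T G ω) :
    W μ ℱ V1 V2 T (T - s) ω ≠ G s ω ∧ s < T := by
  have h := Nat.notMem_of_lt_sInf hs
  simp only [Set.mem_setOf_eq, not_or, not_le] at h
  exact h

theorem hitT_isStoppingTime {G : ℕ → Ω → ℝ}
    (hadp1 : ∀ t, StronglyMeasurable[ℱ t] (V1 t))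
    (hadp2 : ∀ t, StronglyMeasurable[ℱ t] (V2 t))
    (hG : ∀ t, StronglyMeasurable[ℱ t] (G t)) :
    IsStoppingTime ℱ (fun ω => (hitT μ ℱ V1 V2 T G ω : WithTop ℕ)) := by
  intro t
  simp only [Nat.cast_withTop, WithTop.coe_le_coe]
  have hset : {ω | hitT μ ℱ V1 V2 T G ω ≤ t} =
      ⋃ s ∈ Finset.range (t+1), {ω | W μ ℱ V1 V2 T (T - s) ω = G s ω ∨ T ≤ s} := by
    ext ω
    simp only [Set.mem_setOf_eq, Set.mem_iUnion, Finset.mem_range, Nat.lt_succ_iff,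
      exists_prop]
    constructor
    · intro h
      exact ⟨_, h, Nat.sInf_mem (⟨T, Or.inr le_rfl⟩ :
        {s | W μ ℱ V1 V2 T (T - s) ω = G s ω ∨ T ≤ s}.Nonempty)⟩
    · rintro ⟨s, hs, hmem⟩
      exact le_trans (Nat.sInf_le hmem) hs
  rw [hset]
  refine MeasurableSet.biUnion (Finset.range (t+1)).countable_toSet fun s hs => ?_
  have hs' : s ≤ t := by
    have := Finset.mem_range.mp (Finset.mem_coe.mp hs); omega
  by_cases hsT : T ≤ s
  · have : {ω | W μ ℱ V1 V2 T (T - s) ω = G s ω ∨ T ≤ s} = Set.univ := by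
      ext ω; simp [hsT]
    rw [this]; exact MeasurableSet.univ
  · push_neg at hsT
    have : {ω | W μ ℱ V1 V2 T (T - s) ω = G s ω ∨ T ≤ s} =
        {ω | W μ ℱ V1 V2 T (T - s) ω = G s ω} := by
      ext ω; simp [not_le.mpr hsT]
    rw [this]
    have hW : StronglyMeasurable[ℱ s] (W μ ℱ V1 V2 T (T - s)) := by
      have := W_meas (μ := μ) (T := T) hadp1 hadp2 (T - s)
      rwa [show T - (T - s) = s by omega] at this
    exact ℱ.mono hs' _ (measurableSet_eq_fun hW.measurable (hG s).measurable)

theorem sum_ite_range {g : ℕ → ℝ} {n T : ℕ} (hn : n ≤ T) :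
    g n = g 0 + ∑ t ∈ Finset.range T, (if t < n then g (t+1) - g t else 0) := by
  have h1 : ∑ t ∈ Finset.range T, (if t < n then g (t+1) - g t else 0)
      = ∑ t ∈ Finset.range n, (g (t+1) - g t) := by
    rw [← Finset.sum_filter]
    congr 1
    ext a
    simp only [Finset.mem_filter, Finset.mem_range]
    omega
  rw [h1, Finset.sum_range_sub]
  ring

theorem integral_stopped_le {C : ℝ} (hC : 0 ≤ C)
    (hadp1 : ∀ t, StronglyMeasurable[ℱ t] (V1 t))
    (hadp2 : ∀ t, StronglyMeasurable[ℱ t] (V2 t))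
    (hb : ∀ t ω, |V1 t ω| ≤ C ∧ |V2 t ω| ≤ C)
    {σ : Ω → ℕ} (hσ : IsStoppingTime ℱ (fun ω => (σ ω : WithTop ℕ))) (hσT : ∀ ω, σ ω ≤ T)
    (hsup : ∀ t, t < T → ∀ᵐ ω ∂μ, t < σ ω →
      (μ[W μ ℱ V1 V2 T (T - (t+1)) | ℱ t]) ω ≤ W μ ℱ V1 V2 T (T - t) ω) :
    ∫ ω, W μ ℱ V1 V2 T (T - σ ω) ω ∂μ ≤ ∫ ω, W μ ℱ V1 V2 T T ω ∂μ := by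
  have hint : ∀ k, Integrable (W μ ℱ V1 V2 T k) μ :=
    fun k => (W_bdd hC hadp1 hadp2 hb k).2
  have hA : ∀ t : ℕ, MeasurableSet[ℱ t] {ω | t < σ ω} := fun t => by
    have h := hσ.measurableSet_gt t
    simp only [Nat.cast_withTop, WithTop.coe_lt_coe] at h
    exact h
  have hAm : ∀ t : ℕ, MeasurableSet {ω | t < σ ω} := fun t => ℱ.le t _ (hA t)
  have hEq : ∀ ω, W μ ℱ V1 V2 T (T - σ ω) ω = W μ ℱ V1 V2 T T ω +
      ∑ t ∈ Finset.range T,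
        Set.indicator {ω' | t < σ ω'} (fun ω' => W μ ℱ V1 V2 T (T - (t+1)) ω'
          - W μ ℱ V1 V2 T (T - t) ω') ω := by
    intro ω
    have := sum_ite_range (g := fun t => W μ ℱ V1 V2 T (T - t) ω) (hσT ω)
    simp only [Nat.sub_zero] at this
    rw [this]
    congr 1
    refine Finset.sum_congr rfl fun t _ => ?_
    rw [Set.indicator_apply]
    simp only [Set.mem_setOf_eq]
  have hI : ∀ t : ℕ, Integrable (Set.indicator {ω' | t < σ ω'}
      (fun ω' => W μ ℱ V1 V2 T (T - (t+1)) ω' - W μ ℱ V1 V2 T (T - t) ω')) μ :=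
    fun t => (((hint _).sub (hint _)).indicator (hAm t))
  calc ∫ ω, W μ ℱ V1 V2 T (T - σ ω) ω ∂μ
      = ∫ ω, (W μ ℱ V1 V2 T T ω + ∑ t ∈ Finset.range T,
          Set.indicator {ω' | t < σ ω'} (fun ω' => W μ ℱ V1 V2 T (T - (t+1)) ω'
            - W μ ℱ V1 V2 T (T - t) ω') ω) ∂μ := by
        exact integral_congr_ae (Filter.Eventually.of_forall hEq)
    _ = (∫ ω, W μ ℱ V1 V2 T T ω ∂μ) + ∑ t ∈ Finset.range T, ∫ ω,
          Set.indicator {ω' | t < σ ω'} (fun ω' => W μ ℱ V1 V2 T (T - (t+1)) ω'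
            - W μ ℱ V1 V2 T (T - t) ω') ω ∂μ := by
        rw [integral_add (hint T) (integrable_finset_sum _ fun t _ => hI t),
          integral_finset_sum _ fun t _ => hI t]
    _ ≤ (∫ ω, W μ ℱ V1 V2 T T ω ∂μ) + 0 := by
        gcongr
        refine Finset.sum_nonpos fun t ht => ?_
        rw [Finset.mem_range] at ht
        rw [integral_indicator (hAm t)]
        have hsub : ∫ ω in {ω' | t < σ ω'}, (W μ ℱ V1 V2 T (T - (t+1)) ω
            - W μ ℱ V1 V2 T (T - t) ω) ∂μ
            = (∫ ω in {ω' | t < σ ω'}, W μ ℱ V1 V2 T (T - (t+1)) ω ∂μ)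
              - ∫ ω in {ω' | t < σ ω'}, W μ ℱ V1 V2 T (T - t) ω ∂μ :=
          integral_sub ((hint _).integrableOn) ((hint _).integrableOn)
        rw [hsub, sub_nonpos,
          ← setIntegral_condExp (ℱ.le t) (hint (T - (t+1))) (hA t)]
        refine setIntegral_mono_ae_restrict
          (integrable_condExp.integrableOn) ((hint _).integrableOn) ?_
        exact (ae_restrict_iff' (hAm t)).2
          (by filter_upwards [hsup t ht] with ω hω hmem; exact hω hmem)
    _ = ∫ ω, W μ ℱ V1 V2 T T ω ∂μ := by ring

theorem integral_stopped_ge {C : ℝ} (hC : 0 ≤ C)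
    (hadp1 : ∀ t, StronglyMeasurable[ℱ t] (V1 t))
    (hadp2 : ∀ t, StronglyMeasurable[ℱ t] (V2 t))
    (hb : ∀ t ω, |V1 t ω| ≤ C ∧ |V2 t ω| ≤ C)
    {σ : Ω → ℕ} (hσ : IsStoppingTime ℱ (fun ω => (σ ω : WithTop ℕ))) (hσT : ∀ ω, σ ω ≤ T)
    (hsub : ∀ t, t < T → ∀ᵐ ω ∂μ, t < σ ω →
      W μ ℱ V1 V2 T (T - t) ω ≤ (μ[W μ ℱ V1 V2 T (T - (t+1)) | ℱ t]) ω) :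
    ∫ ω, W μ ℱ V1 V2 T T ω ∂μ ≤ ∫ ω, W μ ℱ V1 V2 T (T - σ ω) ω ∂μ := by
  have hint : ∀ k, Integrable (W μ ℱ V1 V2 T k) μ :=
    fun k => (W_bdd hC hadp1 hadp2 hb k).2
  have hA : ∀ t : ℕ, MeasurableSet[ℱ t] {ω | t < σ ω} := fun t => by
    have h := hσ.measurableSet_gt t
    simp only [Nat.cast_withTop, WithTop.coe_lt_coe] at h
    exact h
  have hAm : ∀ t : ℕ, MeasurableSet {ω | t < σ ω} := fun t => ℱ.le t _ (hA t)
  have hEq : ∀ ω, W μ ℱ V1 V2 T (T - σ ω) ω = W μ ℱ V1 V2 T T ω +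
      ∑ t ∈ Finset.range T,
        Set.indicator {ω' | t < σ ω'} (fun ω' => W μ ℱ V1 V2 T (T - (t+1)) ω'
          - W μ ℱ V1 V2 T (T - t) ω') ω := by
    intro ω
    have := sum_ite_range (g := fun t => W μ ℱ V1 V2 T (T - t) ω) (hσT ω)
    simp only [Nat.sub_zero] at this
    rw [this]
    congr 1
    refine Finset.sum_congr rfl fun t _ => ?_
    rw [Set.indicator_apply]
    simp only [Set.mem_setOf_eq]
  have hI : ∀ t : ℕ, Integrable (Set.indicator {ω' | t < σ ω'}
      (fun ω' => W μ ℱ V1 V2 T (T - (t+1)) ω' - W μ ℱ V1 V2 T (T - t) ω')) μ :=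
    fun t => (((hint _).sub (hint _)).indicator (hAm t))
  have key : ∫ ω, W μ ℱ V1 V2 T (T - σ ω) ω ∂μ = (∫ ω, W μ ℱ V1 V2 T T ω ∂μ)
      + ∑ t ∈ Finset.range T, ∫ ω,
          Set.indicator {ω' | t < σ ω'} (fun ω' => W μ ℱ V1 V2 T (T - (t+1)) ω'
            - W μ ℱ V1 V2 T (T - t) ω') ω ∂μ := by
    rw [← integral_finset_sum _ fun t _ => hI t,
      ← integral_add (hint T) (integrable_finset_sum _ fun t _ => hI t)]
    exact integral_congr_ae (Filter.Eventually.of_forall hEq)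
  rw [key]
  have hnn : ∀ t ∈ Finset.range T, (0:ℝ) ≤ ∫ ω,
      Set.indicator {ω' | t < σ ω'} (fun ω' => W μ ℱ V1 V2 T (T - (t+1)) ω'
        - W μ ℱ V1 V2 T (T - t) ω') ω ∂μ := by
    intro t ht
    rw [Finset.mem_range] at ht
    rw [integral_indicator (hAm t)]
    have hsub' : ∫ ω in {ω' | t < σ ω'}, (W μ ℱ V1 V2 T (T - (t+1)) ω
        - W μ ℱ V1 V2 T (T - t) ω) ∂μ
        = (∫ ω in {ω' | t < σ ω'}, W μ ℱ V1 V2 T (T - (t+1)) ω ∂μ)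
          - ∫ ω in {ω' | t < σ ω'}, W μ ℱ V1 V2 T (T - t) ω ∂μ :=
      integral_sub ((hint _).integrableOn) ((hint _).integrableOn)
    rw [hsub', sub_nonneg,
      ← setIntegral_condExp (ℱ.le t) (hint (T - (t+1))) (hA t)]
    refine setIntegral_mono_ae_restrict
      ((hint _).integrableOn) (integrable_condExp.integrableOn) ?_
    exact (ae_restrict_iff' (hAm t)).2
      (by filter_upwards [hsub t ht] with ω hω hmem; exact hω hmem)
  linarith [Finset.sum_nonneg hnn]

theorem ae_forall_le {T : ℕ} {P : ℕ → Ω → Prop} (h : ∀ t, t ≤ T → ∀ᵐ ω ∂μ, P t ω) :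
    ∀ᵐ ω ∂μ, ∀ t, t ≤ T → P t ω := by
  rw [ae_all_iff]
  intro t
  rcases le_or_gt t T with ht | ht
  · filter_upwards [h t ht] with ω h' _ using h'
  · exact Filter.Eventually.of_forall fun ω hle => absurd hle (not_le.2 ht)

theorem meas_comp {G : ℕ → Ω → ℝ} (hG : ∀ t, StronglyMeasurable[ℱ t] (G t))
    {σ : Ω → ℕ} (hσ : Measurable σ) : Measurable fun ω => G (σ ω) ω := by
  have h1 : Measurable fun p : Ω × ℕ => G p.2 p.1 :=
    measurable_from_prod_countable_left fun t => ((hG t).mono (ℱ.le t)).measurable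
  exact h1.comp (measurable_id.prodMk hσ)

theorem meas_W_comp (hadp1 : ∀ t, StronglyMeasurable[ℱ t] (V1 t))
    (hadp2 : ∀ t, StronglyMeasurable[ℱ t] (V2 t))
    {σ : Ω → ℕ} (hσ : Measurable σ) : Measurable fun ω => W μ ℱ V1 V2 T (T - σ ω) ω := by
  have h1 : Measurable fun p : Ω × ℕ => W μ ℱ V1 V2 T (T - p.2) p.1 :=
    measurable_from_prod_countable_left fun t =>
      ((W_meas (μ := μ) (T := T) hadp1 hadp2 (T - t)).mono (ℱ.le _)).measurable
  exact h1.comp (measurable_id.prodMk hσ)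

theorem stopping_meas {σ : Ω → ℕ} (hσ : IsStoppingTime ℱ (fun ω => (σ ω : WithTop ℕ))) (hσT : ∀ ω, σ ω ≤ T) :
    Measurable σ := by
  refine measurable_to_countable' fun x => ?_
  have h := ℱ.le x _ (hσ.measurableSet_eq x)
  convert h using 1
  ext ω; simp only [Set.mem_preimage, Set.mem_singleton_iff, Set.mem_setOf_eq, Nat.cast_withTop, WithTop.coe_eq_coe]

theorem J_le {C : ℝ} (hC : 0 ≤ C)
    (hadp1 : ∀ t, StronglyMeasurable[ℱ t] (V1 t))
    (hadp2 : ∀ t, StronglyMeasurable[ℱ t] (V2 t))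
    (hb : ∀ t ω, |V1 t ω| ≤ C ∧ |V2 t ω| ≤ C)
    (h12 : ∀ t, V1 t ≤ᵐ[μ] V2 t) (hT12 : V1 T =ᵐ[μ] V2 T)
    {τ : Ω → ℕ} (hτ : IsStoppingTime ℱ (fun ω => (τ ω : WithTop ℕ))) (hτT : ∀ ω, τ ω ≤ T) :
    ∫ ω, (if τ ω ≤ hitT μ ℱ V1 V2 T V2 ω then V1 (τ ω) ω
      else V2 (hitT μ ℱ V1 V2 T V2 ω) ω) ∂μ ≤ ∫ ω, W μ ℱ V1 V2 T T ω ∂μ := by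
  set ρT := hitT μ ℱ V1 V2 T V2 with hρdef
  have hρst : IsStoppingTime ℱ (fun ω => (ρT ω : WithTop ℕ)) := hitT_isStoppingTime hadp1 hadp2 hadp2
  set σ : Ω → ℕ := fun ω => min (τ ω) (ρT ω) with hσdef
  have hσ : IsStoppingTime ℱ (fun ω => (σ ω : WithTop ℕ)) := by
    have h := hτ.min hρst
    simp only [Nat.cast_withTop, ← WithTop.coe_min] at h
    simp only [← Nat.cast_withTop] at h
    exact h
  have hσT : ∀ ω, σ ω ≤ T := fun ω => le_trans (min_le_left _ _) (hτT ω)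
  have hsup : ∀ t, t < T → ∀ᵐ ω ∂μ, t < σ ω →
      (μ[W μ ℱ V1 V2 T (T - (t+1)) | ℱ t]) ω ≤ W μ ℱ V1 V2 T (T - t) ω := by
    intro t ht
    filter_upwards [W_between h12 hT12 t ht.le] with ω hW htσ
    have htρ : t < ρT ω := (lt_min_iff.mp htσ).2
    have hne := (hitT_not ω t htρ).1
    exact W_super t ht ω (lt_of_le_of_ne hW.2 hne)
  have h1 := integral_stopped_le hC hadp1 hadp2 hb hσ hσT hsup
  refine le_trans ?_ h1
  have τmeas : Measurable τ := stopping_meas hτ hτT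
  have ρmeas : Measurable ρT := stopping_meas hρst hitT_le
  have hWbd : ∀ᵐ ω ∂μ, ∀ t, t ≤ T → |W μ ℱ V1 V2 T (T - t) ω| ≤ C :=
    ae_forall_le fun t _ => (W_bdd hC hadp1 hadp2 hb (T - t)).1
  have intR : Integrable (fun ω => W μ ℱ V1 V2 T (T - σ ω) ω) μ := by
    refine Integrable.mono' (integrable_const C)
      ((meas_W_comp hadp1 hadp2 (τmeas.min ρmeas)).aestronglyMeasurable) ?_
    filter_upwards [hWbd] with ω hω
    simpa [Real.norm_eq_abs] using hω (σ ω) (hσT ω)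
  have intL : Integrable (fun ω => if τ ω ≤ ρT ω then V1 (τ ω) ω else V2 (ρT ω) ω) μ := by
    refine Integrable.mono' (integrable_const C) ?_
      (Filter.Eventually.of_forall fun ω => ?_)
    · exact (Measurable.ite (measurableSet_le τmeas ρmeas)
        (meas_comp hadp1 τmeas) (meas_comp hadp2 ρmeas)).aestronglyMeasurable
    · by_cases hc : τ ω ≤ ρT ω
      · simpa [hc, Real.norm_eq_abs] using (hb (τ ω) ω).1
      · simpa [hc, Real.norm_eq_abs] using (hb (ρT ω) ω).2
  refine integral_mono_ae intL intR ?_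
  filter_upwards [ae_forall_le (fun t ht => W_between (ℱ := ℱ) h12 hT12 t ht), hT12] with ω hbet hWT
  by_cases hc : τ ω ≤ ρT ω
  · simp only [if_pos hc, hσdef, min_eq_left hc]
    exact (hbet (τ ω) (hτT ω)).1
  · push_neg at hc
    simp only [if_neg (not_le.mpr hc), hσdef, min_eq_right hc.le]
    rcases hitT_mem (μ := μ) (ℱ := ℱ) (V1 := V1) (V2 := V2) (T := T) (G := V2) ω with h | h
    · exact le_of_eq h.symm
    · rw [show ρT ω = T from h, Nat.sub_self]
      exact le_of_eq hWT.symm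

theorem J_ge {C : ℝ} (hC : 0 ≤ C)
    (hadp1 : ∀ t, StronglyMeasurable[ℱ t] (V1 t))
    (hadp2 : ∀ t, StronglyMeasurable[ℱ t] (V2 t))
    (hb : ∀ t ω, |V1 t ω| ≤ C ∧ |V2 t ω| ≤ C)
    (h12 : ∀ t, V1 t ≤ᵐ[μ] V2 t) (hT12 : V1 T =ᵐ[μ] V2 T)
    {ρ : Ω → ℕ} (hρ : IsStoppingTime ℱ (fun ω => (ρ ω : WithTop ℕ))) (hρT : ∀ ω, ρ ω ≤ T) :
    ∫ ω, W μ ℱ V1 V2 T T ω ∂μ ≤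
      ∫ ω, (if hitT μ ℱ V1 V2 T V1 ω ≤ ρ ω then V1 (hitT μ ℱ V1 V2 T V1 ω) ω
        else V2 (ρ ω) ω) ∂μ := by
  set τT := hitT μ ℱ V1 V2 T V1 with hτdef
  have hτst : IsStoppingTime ℱ (fun ω => (τT ω : WithTop ℕ)) := hitT_isStoppingTime hadp1 hadp2 hadp1
  set σ : Ω → ℕ := fun ω => min (τT ω) (ρ ω) with hσdef
  have hσ : IsStoppingTime ℱ (fun ω => (σ ω : WithTop ℕ)) := by
    have h := hτst.min hρ
    simp only [Nat.cast_withTop, ← WithTop.coe_min] at h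
    simp only [← Nat.cast_withTop] at h
    exact h
  have hσT : ∀ ω, σ ω ≤ T := fun ω => le_trans (min_le_left _ _) (hitT_le ω)
  have hsub : ∀ t, t < T → ∀ᵐ ω ∂μ, t < σ ω →
      W μ ℱ V1 V2 T (T - t) ω ≤ (μ[W μ ℱ V1 V2 T (T - (t+1)) | ℱ t]) ω := by
    intro t ht
    filter_upwards [W_between h12 hT12 t ht.le] with ω hW htσ
    have htτ : t < τT ω := (lt_min_iff.mp htσ).1
    have hne := (hitT_not ω t htτ).1
    exact W_sub t ht ω (lt_of_le_of_ne hW.1 (Ne.symm hne))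
  have h1 := integral_stopped_ge hC hadp1 hadp2 hb hσ hσT hsub
  refine le_trans h1 ?_
  have ρmeas : Measurable ρ := stopping_meas hρ hρT
  have τmeas : Measurable τT := stopping_meas hτst hitT_le
  have hWbd : ∀ᵐ ω ∂μ, ∀ t, t ≤ T → |W μ ℱ V1 V2 T (T - t) ω| ≤ C :=
    ae_forall_le fun t _ => (W_bdd hC hadp1 hadp2 hb (T - t)).1
  have intL : Integrable (fun ω => W μ ℱ V1 V2 T (T - σ ω) ω) μ := by
    refine Integrable.mono' (integrable_const C)
      ((meas_W_comp hadp1 hadp2 (τmeas.min ρmeas)).aestronglyMeasurable) ?_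
    filter_upwards [hWbd] with ω hω
    simpa [Real.norm_eq_abs] using hω (σ ω) (hσT ω)
  have intR : Integrable (fun ω => if τT ω ≤ ρ ω then V1 (τT ω) ω else V2 (ρ ω) ω) μ := by
    refine Integrable.mono' (integrable_const C) ?_
      (Filter.Eventually.of_forall fun ω => ?_)
    · exact (Measurable.ite (measurableSet_le τmeas ρmeas)
        (meas_comp hadp1 τmeas) (meas_comp hadp2 ρmeas)).aestronglyMeasurable
    · by_cases hc : τT ω ≤ ρ ω
      · simpa [hc, Real.norm_eq_abs] using (hb (τT ω) ω).1
      · simpa [hc, Real.norm_eq_abs] using (hb (ρ ω) ω).2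
  refine integral_mono_ae intL intR ?_
  filter_upwards [ae_forall_le (fun t ht => W_between (ℱ := ℱ) h12 hT12 t ht)] with ω hbet
  by_cases hc : τT ω ≤ ρ ω
  · simp only [if_pos hc, hσdef, min_eq_left hc]
    rcases hitT_mem (μ := μ) (ℱ := ℱ) (V1 := V1) (V2 := V2) (T := T) (G := V1) ω with h | h
    · exact le_of_eq h
    · rw [show τT ω = T from h, Nat.sub_self]
      exact le_rfl
  · push_neg at hc
    simp only [if_neg (not_le.mpr hc), hσdef, min_eq_right hc.le]
    exact (hbet (ρ ω) (hρT ω)).2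

theorem hit_ae {V G : ℕ → Ω → ℝ}
    (h1 : ∀ t, t ≤ T → V t =ᵐ[μ] W μ ℱ V1 V2 T (T - t))
    (h2 : V1 T =ᵐ[μ] G T) :
    (fun ω => sInf {s | V s ω = G s ω}) =ᵐ[μ] hitT μ ℱ V1 V2 T G := by
  filter_upwards [ae_forall_le (fun t ht => h1 t ht), h2] with ω hV hG
  have hTA : T ∈ {s | V s ω = G s ω} := by
    show V T ω = G T ω
    rw [hV T le_rfl, Nat.sub_self]; exact hG
  have hTB : T ∈ {s | W μ ℱ V1 V2 T (T - s) ω = G s ω ∨ T ≤ s} := Or.inr le_rfl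
  have hBle : hitT μ ℱ V1 V2 T G ω ≤ T := hitT_le ω
  have hAle : sInf {s | V s ω = G s ω} ≤ T := Nat.sInf_le hTA
  have hAmem := Nat.sInf_mem (⟨T, hTA⟩ : {s | V s ω = G s ω}.Nonempty)
  show sInf {s | V s ω = G s ω} = hitT μ ℱ V1 V2 T G ω
  apply le_antisymm
  · rcases hitT_mem (μ := μ) (ℱ := ℱ) (V1 := V1) (V2 := V2) (T := T) (G := G) ω with hb | hb
    · refine Nat.sInf_le ?_
      show V _ ω = G _ ω
      rw [hV _ hBle]; exact hb
    · exact hAle.trans (le_of_eq hb.symm)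
  · refine Nat.sInf_le (Or.inl ?_)
    rw [← hV _ hAle]
    exact hAmem

end Stmt12Aux

open Stmt12Aux in
/-- Discrete-time Dynkin game with payoffs `V¹ ≤ V²`, `V¹_T = V²_T`: the upper and lower
values coincide, and `(ρ_d, τ_d)` given by the first hitting times of `{V = V²}` and
`{V = V¹}` (with `V` the backward-induction value process) is a saddle point. -/
theorem stmt_12 {Ω : Type*} {m : MeasurableSpace Ω} {μ : Measure Ω} [IsProbabilityMeasure μ]
    (ℱ : Filtration ℕ m) (T : ℕ)
    (V1 V2 V : ℕ → Ω → ℝ)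
    (hadp1 : ∀ t, StronglyMeasurable[ℱ t] (V1 t))
    (hadp2 : ∀ t, StronglyMeasurable[ℱ t] (V2 t))
    (hbdd : ∃ C, ∀ t ω, |V1 t ω| ≤ C ∧ |V2 t ω| ≤ C)
    (h12 : ∀ t, V1 t ≤ᵐ[μ] V2 t)
    (hT12 : V1 T =ᵐ[μ] V2 T)
    -- backward recursion for the value process V
    (hVT : V T =ᵐ[μ] V1 T)
    (hVrec : ∀ t < T,
      V t =ᵐ[μ] fun ω => min (V2 t ω) (max (V1 t ω) ((μ[V (t + 1) | ℱ t]) ω)))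
    (ρd τd : Ω → ℕ)
    (hρd : ρd = fun ω => sInf {s | V s ω = V2 s ω})
    (hτd : τd = fun ω => sInf {s | V s ω = V1 s ω})
    (J : (Ω → ℕ) → (Ω → ℕ) → ℝ)
    (hJ : ∀ ρ τ, J ρ τ = ∫ ω, (if τ ω ≤ ρ ω then V1 (τ ω) ω else V2 (ρ ω) ω) ∂μ) :
    (⨅ ρ : {σ : Ω → ℕ // IsStoppingTime ℱ (fun ω => (σ ω : WithTop ℕ)) ∧ ∀ ω, σ ω ≤ T},
        ⨆ τ : {σ : Ω → ℕ // IsStoppingTime ℱ (fun ω => (σ ω : WithTop ℕ)) ∧ ∀ ω, σ ω ≤ T}, J ρ.1 τ.1) =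
      (⨆ τ : {σ : Ω → ℕ // IsStoppingTime ℱ (fun ω => (σ ω : WithTop ℕ)) ∧ ∀ ω, σ ω ≤ T},
        ⨅ ρ : {σ : Ω → ℕ // IsStoppingTime ℱ (fun ω => (σ ω : WithTop ℕ)) ∧ ∀ ω, σ ω ≤ T}, J ρ.1 τ.1) ∧
    (∀ τ : Ω → ℕ, IsStoppingTime ℱ (fun ω => (τ ω : WithTop ℕ)) → (∀ ω, τ ω ≤ T) →
      J ρd τ ≤ ∫ ω, V 0 ω ∂μ) ∧
    (∀ ρ : Ω → ℕ, IsStoppingTime ℱ (fun ω => (ρ ω : WithTop ℕ)) → (∀ ω, ρ ω ≤ T) →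
      ∫ ω, V 0 ω ∂μ ≤ J ρ τd) := by
  obtain ⟨C0, hb0⟩ := hbdd
  set C : ℝ := |C0| with hCdef
  have hC : 0 ≤ C := abs_nonneg C0
  have hb : ∀ t ω, |V1 t ω| ≤ C ∧ |V2 t ω| ≤ C := fun t ω =>
    ⟨(hb0 t ω).1.trans (le_abs_self C0), (hb0 t ω).2.trans (le_abs_self C0)⟩
  have hV0 : V 0 =ᵐ[μ] fun ω => W μ ℱ V1 V2 T T ω := by
    simpa using W_ae_eq hVT hVrec 0 (Nat.zero_le T)
  have hint0 : ∫ ω, V 0 ω ∂μ = ∫ ω, W μ ℱ V1 V2 T T ω ∂μ := integral_congr_ae hV0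
  have hρeq : ρd =ᵐ[μ] hitT μ ℱ V1 V2 T V2 := by
    rw [hρd]; exact hit_ae (fun t ht => W_ae_eq hVT hVrec t ht) hT12
  have hτeq : τd =ᵐ[μ] hitT μ ℱ V1 V2 T V1 := by
    rw [hτd]; exact hit_ae (fun t ht => W_ae_eq hVT hVrec t ht) Filter.EventuallyEq.rfl
  have part2 : ∀ τ : Ω → ℕ, IsStoppingTime ℱ (fun ω => (τ ω : WithTop ℕ)) → (∀ ω, τ ω ≤ T) →
      J ρd τ ≤ ∫ ω, V 0 ω ∂μ := by
    intro τ hτ hτT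
    rw [hJ, hint0]
    have hcong : ∫ ω, (if τ ω ≤ ρd ω then V1 (τ ω) ω else V2 (ρd ω) ω) ∂μ
        = ∫ ω, (if τ ω ≤ hitT μ ℱ V1 V2 T V2 ω then V1 (τ ω) ω
            else V2 (hitT μ ℱ V1 V2 T V2 ω) ω) ∂μ := by
      refine integral_congr_ae ?_
      filter_upwards [hρeq] with ω h
      rw [h]
    rw [hcong]
    exact J_le hC hadp1 hadp2 hb h12 hT12 hτ hτT
  have part3 : ∀ ρ : Ω → ℕ, IsStoppingTime ℱ (fun ω => (ρ ω : WithTop ℕ)) → (∀ ω, ρ ω ≤ T) →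
      ∫ ω, V 0 ω ∂μ ≤ J ρ τd := by
    intro ρ hρ hρT
    rw [hJ, hint0]
    have hcong : ∫ ω, (if τd ω ≤ ρ ω then V1 (τd ω) ω else V2 (ρ ω) ω) ∂μ
        = ∫ ω, (if hitT μ ℱ V1 V2 T V1 ω ≤ ρ ω then V1 (hitT μ ℱ V1 V2 T V1 ω) ω
            else V2 (ρ ω) ω) ∂μ := by
      refine integral_congr_ae ?_
      filter_upwards [hτeq] with ω h
      rw [h]
    rw [hcong]
    exact J_ge hC hadp1 hadp2 hb h12 hT12 hρ hρT
  refine ⟨?_, part2, part3⟩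
  haveI hne : Nonempty {σ : Ω → ℕ // IsStoppingTime ℱ (fun ω => (σ ω : WithTop ℕ)) ∧ ∀ ω, σ ω ≤ T} :=
    ⟨⟨fun _ => 0, isStoppingTime_const ℱ 0, fun ω => Nat.zero_le T⟩⟩
  have hJbd : ∀ ρ τ : {σ : Ω → ℕ // IsStoppingTime ℱ (fun ω => (σ ω : WithTop ℕ)) ∧ ∀ ω, σ ω ≤ T},
      |J ρ.1 τ.1| ≤ C := by
    intro ρ τ
    rw [hJ, ← Real.norm_eq_abs]
    calc ‖∫ ω, (if τ.1 ω ≤ ρ.1 ω then V1 (τ.1 ω) ω else V2 (ρ.1 ω) ω) ∂μ‖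
        ≤ C * (μ Set.univ).toReal := by
          refine norm_integral_le_of_norm_le_const (Filter.Eventually.of_forall fun ω => ?_)
          by_cases hc : τ.1 ω ≤ ρ.1 ω
          · simpa [hc, Real.norm_eq_abs] using (hb (τ.1 ω) ω).1
          · simpa [hc, Real.norm_eq_abs] using (hb (ρ.1 ω) ω).2
      _ = C := by simp [measure_univ]
  have hbelow : ∀ τ : {σ : Ω → ℕ // IsStoppingTime ℱ (fun ω => (σ ω : WithTop ℕ)) ∧ ∀ ω, σ ω ≤ T},
      BddBelow (Set.range fun ρ : {σ : Ω → ℕ // IsStoppingTime ℱ (fun ω => (σ ω : WithTop ℕ)) ∧ ∀ ω, σ ω ≤ T} =>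
        J ρ.1 τ.1) := fun τ =>
    ⟨-C, by rintro x ⟨ρ, rfl⟩; exact (abs_le.mp (hJbd ρ τ)).1⟩
  have habove : ∀ ρ : {σ : Ω → ℕ // IsStoppingTime ℱ (fun ω => (σ ω : WithTop ℕ)) ∧ ∀ ω, σ ω ≤ T},
      BddAbove (Set.range fun τ : {σ : Ω → ℕ // IsStoppingTime ℱ (fun ω => (σ ω : WithTop ℕ)) ∧ ∀ ω, σ ω ≤ T} =>
        J ρ.1 τ.1) := fun ρ =>
    ⟨C, by rintro x ⟨τ, rfl⟩; exact (abs_le.mp (hJbd ρ τ)).2⟩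
  have hbelow2 : BddBelow (Set.range
      fun ρ : {σ : Ω → ℕ // IsStoppingTime ℱ (fun ω => (σ ω : WithTop ℕ)) ∧ ∀ ω, σ ω ≤ T} =>
        ⨆ τ : {σ : Ω → ℕ // IsStoppingTime ℱ (fun ω => (σ ω : WithTop ℕ)) ∧ ∀ ω, σ ω ≤ T}, J ρ.1 τ.1) := by
    refine ⟨-C, ?_⟩
    rintro x ⟨ρ, rfl⟩
    exact le_trans (abs_le.mp (hJbd ρ (Classical.arbitrary _))).1
      (le_ciSup (habove ρ) (Classical.arbitrary _))
  have habove2 : BddAbove (Set.range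
      fun τ : {σ : Ω → ℕ // IsStoppingTime ℱ (fun ω => (σ ω : WithTop ℕ)) ∧ ∀ ω, σ ω ≤ T} =>
        ⨅ ρ : {σ : Ω → ℕ // IsStoppingTime ℱ (fun ω => (σ ω : WithTop ℕ)) ∧ ∀ ω, σ ω ≤ T}, J ρ.1 τ.1) := by
    refine ⟨C, ?_⟩
    rintro x ⟨τ, rfl⟩
    exact le_trans (ciInf_le (hbelow τ) (Classical.arbitrary _))
      (abs_le.mp (hJbd (Classical.arbitrary _) τ)).2
  set ρstar : {σ : Ω → ℕ // IsStoppingTime ℱ (fun ω => (σ ω : WithTop ℕ)) ∧ ∀ ω, σ ω ≤ T} :=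
    ⟨hitT μ ℱ V1 V2 T V2, hitT_isStoppingTime hadp1 hadp2 hadp2, hitT_le⟩ with hρstar
  set τstar : {σ : Ω → ℕ // IsStoppingTime ℱ (fun ω => (σ ω : WithTop ℕ)) ∧ ∀ ω, σ ω ≤ T} :=
    ⟨hitT μ ℱ V1 V2 T V1, hitT_isStoppingTime hadp1 hadp2 hadp1, hitT_le⟩ with hτstar
  apply le_antisymm
  · calc (⨅ ρ : {σ : Ω → ℕ // IsStoppingTime ℱ (fun ω => (σ ω : WithTop ℕ)) ∧ ∀ ω, σ ω ≤ T},
          ⨆ τ : {σ : Ω → ℕ // IsStoppingTime ℱ (fun ω => (σ ω : WithTop ℕ)) ∧ ∀ ω, σ ω ≤ T}, J ρ.1 τ.1)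
        ≤ ⨆ τ : {σ : Ω → ℕ // IsStoppingTime ℱ (fun ω => (σ ω : WithTop ℕ)) ∧ ∀ ω, σ ω ≤ T}, J ρstar.1 τ.1 :=
          ciInf_le hbelow2 ρstar
      _ ≤ ∫ ω, W μ ℱ V1 V2 T T ω ∂μ := by
          refine ciSup_le fun τ => ?_
          rw [hJ]
          exact J_le hC hadp1 hadp2 hb h12 hT12 τ.2.1 τ.2.2
      _ ≤ ⨅ ρ : {σ : Ω → ℕ // IsStoppingTime ℱ (fun ω => (σ ω : WithTop ℕ)) ∧ ∀ ω, σ ω ≤ T}, J ρ.1 τstar.1 := by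
          refine le_ciInf fun ρ => ?_
          rw [hJ]
          exact J_ge hC hadp1 hadp2 hb h12 hT12 ρ.2.1 ρ.2.2
      _ ≤ ⨆ τ : {σ : Ω → ℕ // IsStoppingTime ℱ (fun ω => (σ ω : WithTop ℕ)) ∧ ∀ ω, σ ω ≤ T},
          ⨅ ρ : {σ : Ω → ℕ // IsStoppingTime ℱ (fun ω => (σ ω : WithTop ℕ)) ∧ ∀ ω, σ ω ≤ T}, J ρ.1 τ.1 :=
          le_ciSup habove2 τstar
  · refine le_ciInf fun ρ => ?_
    exact ciSup_mono (habove ρ) fun τ => ciInf_le (hbelow τ) ρ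
end

section
/- With ρ* the Type II strategy ρ*(τ) := ρ_d 1_{τ>ρ_d} + ρ_u(τ) 1_{τ≤ρ_d}, where (ρ_d,τ_d) is the Dynkin-game saddle point and ρ_u(t) optimizes V¹_t, one has sup_{τ∈𝒯} E[U(ρ*(τ),τ)] ≤ V; in particular the upper game value inf_{ρ∈𝕋^{ii}} sup_{τ∈𝒯} E[U(ρ(τ),τ)] ≤ V. -/
open MeasureTheory

section SnellAux

variable {Ω : Type*} {m : MeasurableSpace Ω} (μ : Measure Ω) (ℱ : Filtration ℕ m)
  (U : ℕ → ℕ → Ω → ℝ) (T t : ℕ)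

/-- Backward-recursion auxiliary for the Snell envelope of `s ↦ U t s`. -/
noncomputable def snellAux : ℕ → Ω → ℝ
  | 0 => U t T
  | (k+1) => fun ω => max (U t (T-(k+1)) ω) (condExp (ℱ (T-(k+1))) μ (snellAux k) ω)

/-- The Snell envelope `Y s` of `s ↦ U t s` on `[s, T]`. -/
noncomputable def snell (s : ℕ) : Ω → ℝ := snellAux μ ℱ U T t (T - s)

/-- Backward-recursion auxiliary for the optimal hitting time. -/
noncomputable def hitAux : ℕ → Ω → ℕ
  | 0 => fun _ => T
  | (k+1) => fun ω =>
      if snellAux μ ℱ U T t (k+1) ω = U t (T-(k+1)) ω then T-(k+1) else hitAux k ω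

/-- First time in `[s,T]` at which the Snell envelope touches the payoff. -/
noncomputable def hit (s : ℕ) : Ω → ℕ := hitAux μ ℱ U T t (T - s)

lemma snell_T : snell μ ℱ U T t T = U t T := by
  simp [snell, snellAux]

lemma snell_eq {s : ℕ} (h : s < T) :
    snell μ ℱ U T t s = fun ω => max (U t s ω) ((μ[snell μ ℱ U T t (s+1) | ℱ s]) ω) := by
  have hk : T - s = (T - (s+1)) + 1 := by omega
  have h2 : T - ((T - (s+1)) + 1) = s := by omega
  show snellAux μ ℱ U T t (T - s) = _
  rw [hk]
  simp only [snellAux, h2]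
  rfl

lemma hit_T : hit μ ℱ U T t T = fun _ => T := by
  simp [hit, hitAux]

lemma hit_eq {s : ℕ} (h : s < T) :
    hit μ ℱ U T t s = fun ω =>
      if snell μ ℱ U T t s ω = U t s ω then s else hit μ ℱ U T t (s+1) ω := by
  have hk : T - s = (T - (s+1)) + 1 := by omega
  have h2 : T - ((T - (s+1)) + 1) = s := by omega
  show hitAux μ ℱ U T t (T - s) = _
  rw [hk]
  simp only [hitAux, h2]
  rw [← hk]
  rfl

/-- Composition measurability for countably-valued time changes. -/
lemma stronglyMeasurable_comp_nat {Ω : Type*} {m : MeasurableSpace Ω} (F : ℕ → ℕ → Ω → ℝ)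
    (hF : ∀ a b, StronglyMeasurable[m] (F a b)) (σ τ : Ω → ℕ)
    (hσ : Measurable σ) (hτ : Measurable τ) :
    StronglyMeasurable[m] (fun ω => F (σ ω) (τ ω) ω) := by
  apply Measurable.stronglyMeasurable
  intro s hs
  have : (fun ω => F (σ ω) (τ ω) ω) ⁻¹' s
      = ⋃ (a : ℕ), ⋃ (b : ℕ), (σ ⁻¹' {a} ∩ τ ⁻¹' {b} ∩ (F a b ⁻¹' s)) := by
    ext ω
    simp only [Set.mem_preimage, Set.mem_iUnion, Set.mem_inter_iff, Set.mem_singleton_iff]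
    constructor
    · intro h; exact ⟨σ ω, τ ω, ⟨rfl, rfl⟩, h⟩
    · rintro ⟨a, b, ⟨ha, hb⟩, h⟩; rwa [ha, hb]
  rw [this]
  exact MeasurableSet.iUnion fun a => MeasurableSet.iUnion fun b =>
    ((hσ (measurableSet_singleton a)).inter (hτ (measurableSet_singleton b))).inter
      ((hF a b).measurable hs)

lemma natST_eq {Ω : Type*} {m : MeasurableSpace Ω} {ℱ : Filtration ℕ m} {σ : Ω → ℕ}
    (h : IsStoppingTime ℱ (fun ω => (σ ω : WithTop ℕ))) (i : ℕ) :
    MeasurableSet[ℱ i] {ω | σ ω = i} := by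
  have := h.measurableSet_eq_of_countable i
  simpa using this

lemma natST_lt {Ω : Type*} {m : MeasurableSpace Ω} {ℱ : Filtration ℕ m} {σ : Ω → ℕ}
    (h : IsStoppingTime ℱ (fun ω => (σ ω : WithTop ℕ))) (i : ℕ) :
    MeasurableSet[ℱ i] {ω | σ ω < i} := by
  have := h.measurableSet_lt_of_countable i
  simpa using this

lemma natST_le {Ω : Type*} {m : MeasurableSpace Ω} {ℱ : Filtration ℕ m} {σ : Ω → ℕ}
    (h : IsStoppingTime ℱ (fun ω => (σ ω : WithTop ℕ))) (i : ℕ) :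
    MeasurableSet[ℱ i] {ω | σ ω ≤ i} := by
  have := h i
  simpa using this

lemma natST_max_const {Ω : Type*} {m : MeasurableSpace Ω} {ℱ : Filtration ℕ m} {σ : Ω → ℕ}
    (h : IsStoppingTime ℱ (fun ω => (σ ω : WithTop ℕ))) (i : ℕ) :
    IsStoppingTime ℱ (fun ω => ((max (σ ω) i : ℕ) : WithTop ℕ)) := by
  have e : (fun ω => ((max (σ ω) i : ℕ) : WithTop ℕ))
      = fun ω => max ((σ ω : WithTop ℕ)) (i : WithTop ℕ) := funext fun ω => by
    rcases le_total (σ ω) i with h' | h'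
    · rw [max_eq_right h']; exact (max_eq_right (WithTop.coe_le_coe.2 h')).symm
    · rw [max_eq_left h']; exact (max_eq_left (WithTop.coe_le_coe.2 h')).symm
  rw [e]
  exact h.max_const i

lemma natST_of_eq {Ω : Type*} {m : MeasurableSpace Ω} {ℱ : Filtration ℕ m} {σ : Ω → ℕ}
    (hσ : ∀ n, MeasurableSet[ℱ n] {ω | σ ω = n}) :
    IsStoppingTime ℱ (fun ω => (σ ω : WithTop ℕ)) :=
  isStoppingTime_of_measurableSet_eq (fun n => by simpa using hσ n)

end SnellAux
/-- With the Type II strategy `ρ*(τ) := ρ_d 1_{τ>ρ_d} + ρ_u(τ) 1_{τ≤ρ_d}`, where `ρ_d` is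
the Dynkin-game saddle component and `ρ_u(t)` optimizes `V¹_t`, one has
`sup_{τ∈𝒯} E[U(ρ*(τ),τ)] ≤ V`; in particular `inf_{ρ∈𝕋ⁱⁱ} sup_{τ∈𝒯} E[U(ρ(τ),τ)] ≤ V`. -/
theorem stmt_14 {Ω : Type*} {m : MeasurableSpace Ω} {μ : Measure Ω} [IsProbabilityMeasure μ]
    (ℱ : Filtration ℕ m) (T : ℕ)
    (U : ℕ → ℕ → Ω → ℝ)
    (hUmeas : ∀ s t, StronglyMeasurable[ℱ (max s t)] (U s t))
    (hUbdd : ∃ C, ∀ s t ω, |U s t ω| ≤ C)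
    (𝒯 : Set (Ω → ℕ))
    (h𝒯 : 𝒯 = {σ | IsStoppingTime ℱ (fun ω => (σ ω : WithTop ℕ)) ∧ ∀ ω, σ ω ≤ T})
    (V1 S V2 : ℕ → Ω → ℝ)
    (hV1le : ∀ t ≤ T, ∀ ρ : Ω → ℕ, IsStoppingTime ℱ (fun ω => (ρ ω : WithTop ℕ)) → (∀ ω, t ≤ ρ ω ∧ ρ ω ≤ T) →
      V1 t ≤ᵐ[μ] μ[fun ω => U (ρ ω) t ω | ℱ t])
    (hV1greatest : ∀ t ≤ T, ∀ Z : Ω → ℝ,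
      (∀ ρ : Ω → ℕ, IsStoppingTime ℱ (fun ω => (ρ ω : WithTop ℕ)) → (∀ ω, t ≤ ρ ω ∧ ρ ω ≤ T) →
        Z ≤ᵐ[μ] μ[fun ω => U (ρ ω) t ω | ℱ t]) → Z ≤ᵐ[μ] V1 t)
    (hSge : ∀ t < T, ∀ τ : Ω → ℕ, IsStoppingTime ℱ (fun ω => (τ ω : WithTop ℕ)) → (∀ ω, t + 1 ≤ τ ω ∧ τ ω ≤ T) →
      μ[fun ω => U t (τ ω) ω | ℱ t] ≤ᵐ[μ] S t)
    (hSleast : ∀ t < T, ∀ Z : Ω → ℝ,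
      (∀ τ : Ω → ℕ, IsStoppingTime ℱ (fun ω => (τ ω : WithTop ℕ)) → (∀ ω, t + 1 ≤ τ ω ∧ τ ω ≤ T) →
        μ[fun ω => U t (τ ω) ω | ℱ t] ≤ᵐ[μ] Z) → S t ≤ᵐ[μ] Z)
    (hV2 : ∀ t < T, ∀ ω, V2 t ω = max (S t ω) (V1 t ω))
    (hV2T : V2 T = U T T)
    (TypeII : ((Ω → ℕ) → Ω → ℕ) → Prop)
    (hTypeII : ∀ ρ, TypeII ρ ↔ ((∀ σ ∈ 𝒯, ρ σ ∈ 𝒯) ∧ ∀ σ₁ ∈ 𝒯, ∀ σ₂ ∈ 𝒯, ∀ ω,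
      (ρ σ₁ ω = ρ σ₂ ω ∧ ρ σ₁ ω < min (σ₁ ω) (σ₂ ω)) ∨
        min (σ₁ ω) (σ₂ ω) ≤ min (ρ σ₁ ω) (ρ σ₂ ω)))
    -- the Dynkin game value V and its optimal ρ_d
    (V : ℝ)
    (hV : V = ⨅ ρ : 𝒯, ⨆ τ : 𝒯,
      ∫ ω, (if τ.1 ω ≤ ρ.1 ω then V1 (τ.1 ω) ω else V2 (ρ.1 ω) ω) ∂μ)
    (ρd : Ω → ℕ) (hρd : ρd ∈ 𝒯)
    (hρdopt : V = ⨆ τ : 𝒯,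
      ∫ ω, (if τ.1 ω ≤ ρd ω then V1 (τ.1 ω) ω else V2 (ρd ω) ω) ∂μ)
    -- optimizers ρ_u(t) of V¹_t
    (ρu : ℕ → Ω → ℕ)
    (hρu : ∀ t ≤ T, IsStoppingTime ℱ (fun ω => (ρu t ω : WithTop ℕ)) ∧ ∀ ω, t ≤ ρu t ω ∧ ρu t ω ≤ T)
    (hρuopt : ∀ t ≤ T, V1 t =ᵐ[μ] μ[fun ω => U (ρu t ω) t ω | ℱ t])
    -- the strategy ρ*
    (ρstar : (Ω → ℕ) → Ω → ℕ)
    (hρstar : ∀ τ ω, ρstar τ ω = if ρd ω < τ ω then ρd ω else ρu (τ ω) ω) :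
    (⨆ τ : 𝒯, ∫ ω, U (ρstar τ.1 ω) (τ.1 ω) ω ∂μ) ≤ V ∧
    (⨅ ρ : {ρ : (Ω → ℕ) → Ω → ℕ // TypeII ρ}, ⨆ τ : 𝒯,
      ∫ ω, U (ρ.1 τ.1 ω) (τ.1 ω) ω ∂μ) ≤ V := by
  classical
  obtain ⟨C0, hC0⟩ := hUbdd
  set C : ℝ := max C0 0 with hCdef
  have hC : ∀ s t ω, |U s t ω| ≤ C := fun s t ω => (hC0 s t ω).trans (le_max_left _ _)
  have hCpos : 0 ≤ C := le_max_right _ _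
  have hle : ∀ n, ℱ n ≤ m := fun n => ℱ.le n
  -- measurability of stopping times
  have st_meas : ∀ {σ : Ω → ℕ}, IsStoppingTime ℱ (fun ω => (σ ω : WithTop ℕ)) → Measurable σ := by
    intro σ hσ
    exact measurable_to_countable' fun n => hle n _ (natST_eq hσ n)
  -- strong measurability of `U` composed with random times
  have hUm : ∀ a b, StronglyMeasurable (U a b) := fun a b => (hUmeas a b).mono (hle _)
  have measU : ∀ (σ τ : Ω → ℕ), Measurable σ → Measurable τ →
      StronglyMeasurable (fun ω => U (σ ω) (τ ω) ω) :=
    fun σ τ hσ hτ => stronglyMeasurable_comp_nat U hUm σ τ hσ hτ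
  have int_of_bdd : ∀ (f : Ω → ℝ), AEStronglyMeasurable f μ → (∀ᵐ ω ∂μ, |f ω| ≤ C) →
      Integrable f μ := by
    intro f hf hb
    exact (integrable_const C).mono' hf (by simpa [Real.norm_eq_abs] using hb)
  have intU : ∀ (σ τ : Ω → ℕ), Measurable σ → Measurable τ →
      Integrable (fun ω => U (σ ω) (τ ω) ω) μ := by
    intro σ τ hσ hτ
    exact int_of_bdd _ (measU σ τ hσ hτ).aestronglyMeasurable
      (Filter.Eventually.of_forall fun ω => hC _ _ ω)
  -- conditional expectations of functions bounded by `C` are bounded by `C`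
  have cond_bdd : ∀ (f : Ω → ℝ) (n : ℕ), Integrable f μ → (∀ᵐ ω ∂μ, |f ω| ≤ C) →
      ∀ᵐ ω ∂μ, |(μ[f|ℱ n]) ω| ≤ C := by
    intro f n hf hb
    have h1 : μ[f|ℱ n] ≤ᵐ[μ] μ[(fun _ => C)|ℱ n] :=
      condExp_mono hf (integrable_const C) (hb.mono fun ω h => (abs_le.1 h).2)
    have h2 : μ[(fun _ => -C)|ℱ n] ≤ᵐ[μ] μ[f|ℱ n] :=
      condExp_mono (integrable_const (-C)) hf (hb.mono fun ω h => (abs_le.1 h).1)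
    have hc1 : μ[(fun _ : Ω => C)|ℱ n] = fun _ => C := condExp_const (hle n) C
    have hc2 : μ[(fun _ : Ω => -C)|ℱ n] = fun _ => -C := condExp_const (hle n) (-C)
    rw [hc1] at h1
    rw [hc2] at h2
    filter_upwards [h1, h2] with ω e1 e2
    exact abs_le.2 ⟨by simpa using e2, by simpa using e1⟩
  -- strong measurability of the Snell envelope
  have snell_sm : ∀ t s, t ≤ s → s ≤ T → StronglyMeasurable[ℱ s] (snell μ ℱ U T t s) := by
    intro t s hts hsT
    rcases eq_or_lt_of_le hsT with h | h
    · subst h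
      rw [snell_T]
      have h1 := hUmeas t s
      rwa [max_eq_right hts] at h1
    · rw [snell_eq μ ℱ U T t h]
      have h1 := hUmeas t s
      rw [max_eq_right hts] at h1
      exact (h1.measurable.max (stronglyMeasurable_condExp.measurable)).stronglyMeasurable
  -- integrability and boundedness of the Snell envelope
  have snell_prop : ∀ t s, t ≤ s → s ≤ T →
      Integrable (snell μ ℱ U T t s) μ ∧ ∀ᵐ ω ∂μ, |snell μ ℱ U T t s ω| ≤ C := by
    have key : ∀ k t s, t ≤ s → s + k = T →
        Integrable (snell μ ℱ U T t s) μ ∧ ∀ᵐ ω ∂μ, |snell μ ℱ U T t s ω| ≤ C := by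
      intro k
      induction k with
      | zero =>
        intro t s hts hsT
        have h' : s = T := by omega
        subst h'
        rw [snell_T]
        exact ⟨int_of_bdd _ (hUm t s).aestronglyMeasurable
          (Filter.Eventually.of_forall fun ω => hC _ _ ω),
          Filter.Eventually.of_forall fun ω => hC _ _ ω⟩
      | succ k ih =>
        intro t s hts hsT
        have hsT' : s < T := by omega
        obtain ⟨ih1, ih2⟩ := ih t (s+1) (by omega) (by omega)
        have hb := cond_bdd _ s ih1 ih2
        have hbd : ∀ᵐ ω ∂μ, |snell μ ℱ U T t s ω| ≤ C := by
          filter_upwards [hb] with ω hω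
          have hsnell : snell μ ℱ U T t s ω
              = max (U t s ω) ((μ[snell μ ℱ U T t (s+1)|ℱ s]) ω) :=
            congrFun (snell_eq μ ℱ U T t hsT') ω
          rw [hsnell]
          have h1 := hC t s ω
          exact abs_le.2 ⟨le_trans (abs_le.1 h1).1 (le_max_left _ _),
            max_le (abs_le.1 h1).2 (abs_le.1 hω).2⟩
        exact ⟨int_of_bdd _ ((snell_sm t s hts hsT'.le).mono (hle s)).aestronglyMeasurable hbd,
          hbd⟩
    intro t s hts hsT
    exact key (T - s) t s hts (by omega)
  -- splitting a conditional expectation along a measurable event at time `s`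
  have cond_split : ∀ (t s : ℕ), t ≤ s → ∀ (A : Set Ω), MeasurableSet[ℱ s] A →
      ∀ (h : Ω → ℝ), Integrable h μ →
      μ[(A.indicator (U t s) + Aᶜ.indicator h)|ℱ s]
        =ᵐ[μ] fun ω => A.indicator (U t s) ω + Aᶜ.indicator (μ[h|ℱ s]) ω := by
    intro t s hts A hA h hint
    have hUsm : StronglyMeasurable[ℱ s] (U t s) := by
      have h1 := hUmeas t s; rwa [max_eq_right hts] at h1
    have hint1 : Integrable (A.indicator (U t s)) μ :=
      (int_of_bdd _ (hUm t s).aestronglyMeasurable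
        (Filter.Eventually.of_forall fun ω => hC _ _ ω)).indicator (hle s _ hA)
    have hint2 : Integrable (Aᶜ.indicator h) μ := hint.indicator (hle s _ hA.compl)
    refine (condExp_add hint1 hint2 (ℱ s)).trans ?_
    rw [condExp_of_stronglyMeasurable (hle s) (hUsm.indicator hA) hint1]
    have hind := condExp_indicator hint hA.compl
    filter_upwards [hind] with ω hω
    simp only [Pi.add_apply]
    rw [hω]
  -- the Snell envelope dominates all conditional payoffs (supermartingale property)
  have dominates : ∀ t s, t ≤ s → s ≤ T → ∀ τ : Ω → ℕ, IsStoppingTime ℱ (fun ω => (τ ω : WithTop ℕ)) →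
      (∀ ω, s ≤ τ ω ∧ τ ω ≤ T) →
      μ[(fun ω => U t (τ ω) ω)|ℱ s] ≤ᵐ[μ] snell μ ℱ U T t s := by
    have key : ∀ k t s, t ≤ s → s + k = T → ∀ τ : Ω → ℕ, IsStoppingTime ℱ (fun ω => (τ ω : WithTop ℕ)) →
        (∀ ω, s ≤ τ ω ∧ τ ω ≤ T) →
        μ[(fun ω => U t (τ ω) ω)|ℱ s] ≤ᵐ[μ] snell μ ℱ U T t s := by
      intro k
      induction k with
      | zero =>
        intro t s hts hsT τ hτ hb
        have h' : s = T := by omega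
        subst h'
        have hUsm : StronglyMeasurable[ℱ s] (U t s) := by
          have h1 := hUmeas t s; rwa [max_eq_right hts] at h1
        have hfun : (fun ω => U t (τ ω) ω) = U t s :=
          funext fun ω => by rw [le_antisymm (hb ω).2 (hb ω).1]
        rw [hfun, snell_T, condExp_of_stronglyMeasurable (hle s) hUsm
          (int_of_bdd _ (hUm t s).aestronglyMeasurable
            (Filter.Eventually.of_forall fun ω => hC _ _ ω))]
      | succ k ih =>
        intro t s hts hsT τ hτ hb
        have hsT' : s < T := by omega
        set A := {ω | τ ω = s} with hAdef
        have hA : MeasurableSet[ℱ s] A := natST_eq hτ s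
        set τ' : Ω → ℕ := fun ω => max (τ ω) (s+1) with hτ'def
        have hτ' : IsStoppingTime ℱ (fun ω => (τ' ω : WithTop ℕ)) := natST_max_const hτ (s+1)
        have hτ'b : ∀ ω, (s+1) ≤ τ' ω ∧ τ' ω ≤ T :=
          fun ω => ⟨le_max_right _ _, max_le (hb ω).2 (by omega)⟩
        have hint' : Integrable (fun ω => U t (τ' ω) ω) μ :=
          intU (fun _ => t) τ' measurable_const (st_meas hτ')
        have hsplit : (fun ω => U t (τ ω) ω)
            = (A.indicator (U t s) + Aᶜ.indicator (fun ω => U t (τ' ω) ω)) := by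
          funext ω
          by_cases h : ω ∈ A
          · have h' : τ ω = s := h
            simp only [Pi.add_apply, Set.indicator_of_mem h,
              Set.indicator_of_notMem (Set.notMem_compl_iff.2 h), add_zero]
            rw [h']
          · have h'' : τ' ω = τ ω := max_eq_left (by
              have h1 := (hb ω).1
              have h2 : τ ω ≠ s := h
              omega)
            simp only [Pi.add_apply, Set.indicator_of_notMem h,
              Set.indicator_of_mem (Set.mem_compl h), zero_add]
            rw [h'']
        have hd := cond_split t s hts A hA _ hint'
        have h2 : μ[(fun ω => U t (τ' ω) ω)|ℱ s] ≤ᵐ[μ] μ[snell μ ℱ U T t (s+1)|ℱ s] := by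
          have htower :
              μ[(fun ω => U t (τ' ω) ω)|ℱ s]
                =ᵐ[μ] μ[μ[(fun ω => U t (τ' ω) ω)|ℱ (s+1)]|ℱ s] :=
            (condExp_condExp_of_le (ℱ.mono (Nat.le_succ s)) (hle (s+1))).symm
          have hmono := condExp_mono (m := ℱ s) integrable_condExp
            (snell_prop t (s+1) (by omega) (by omega)).1
            (ih t (s+1) (by omega) (by omega) τ' hτ' hτ'b)
          exact htower.le.trans hmono
        rw [hsplit]
        refine hd.le.trans ?_
        filter_upwards [h2] with ω hω
        have hsnell : snell μ ℱ U T t s ω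
            = max (U t s ω) ((μ[snell μ ℱ U T t (s+1)|ℱ s]) ω) :=
          congrFun (snell_eq μ ℱ U T t hsT') ω
        by_cases h : ω ∈ A
        · simp only [Set.indicator_of_mem h,
            Set.indicator_of_notMem (Set.notMem_compl_iff.2 h), add_zero]
          rw [hsnell]
          exact le_max_left _ _
        · simp only [Set.indicator_of_notMem h,
            Set.indicator_of_mem (Set.mem_compl h), zero_add]
          rw [hsnell]
          exact hω.trans (le_max_right _ _)
    intro t s hts hsT
    exact key (T - s) t s hts (by omega)
  -- bounds for the hitting time
  have hit_bd : ∀ t s, s ≤ T → ∀ ω, s ≤ hit μ ℱ U T t s ω ∧ hit μ ℱ U T t s ω ≤ T := by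
    have key : ∀ k t s, s + k = T → ∀ ω, s ≤ hit μ ℱ U T t s ω ∧ hit μ ℱ U T t s ω ≤ T := by
      intro k
      induction k with
      | zero =>
        intro t s hsT ω
        have h' : s = T := by omega
        rw [h', congrFun (hit_T μ ℱ U T t) ω]
        omega
      | succ k ih =>
        intro t s hsT ω
        have hsT' : s < T := by omega
        rw [congrFun (hit_eq μ ℱ U T t hsT') ω]
        have := ih t (s+1) (by omega) ω
        split_ifs with h
        · omega
        · omega
    intro t s hsT; exact key (T - s) t s (by omega)
  -- the hitting time is a stopping time
  have hit_st : ∀ t s, t ≤ s → s ≤ T → IsStoppingTime ℱ (fun ω => (hit μ ℱ U T t s ω : WithTop ℕ)) := by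
    have key : ∀ k t s, t ≤ s → s + k = T → ∀ n,
        MeasurableSet[ℱ n] {ω | hit μ ℱ U T t s ω = n} := by
      intro k
      induction k with
      | zero =>
        intro t s hts hsT n
        have h' : s = T := by omega
        rw [h']
        have : {ω | hit μ ℱ U T t T ω = n} = {ω : Ω | T = n} := by
          ext ω; simp [congrFun (hit_T μ ℱ U T t) ω]
        rw [this]
        by_cases h : T = n
        · simp only [h, Set.setOf_true]; exact @MeasurableSet.univ _ (ℱ n)
        · simp only [h, Set.setOf_false]; exact @MeasurableSet.empty _ (ℱ n)
      | succ k ih =>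
        intro t s hts hsT n
        have hsT' : s < T := by omega
        have hA' : MeasurableSet[ℱ s] {ω | snell μ ℱ U T t s ω = U t s ω} := by
          have hUsm : StronglyMeasurable[ℱ s] (U t s) := by
            have h1 := hUmeas t s; rwa [max_eq_right hts] at h1
          exact measurableSet_eq_fun (snell_sm t s hts hsT'.le).measurable hUsm.measurable
        rcases lt_trichotomy n s with hn | hn | hn
        · have : {ω | hit μ ℱ U T t s ω = n} = ∅ := by
            ext ω
            simp only [Set.mem_setOf_eq, Set.mem_empty_iff_false, iff_false]
            intro h
            rw [congrFun (hit_eq μ ℱ U T t hsT') ω] at h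
            have h2 := hit_bd t (s+1) (by omega) ω
            split_ifs at h <;> omega
          rw [this]; exact @MeasurableSet.empty _ (ℱ n)
        · have : {ω | hit μ ℱ U T t s ω = n} = {ω | snell μ ℱ U T t s ω = U t s ω} := by
            ext ω
            simp only [Set.mem_setOf_eq]
            rw [congrFun (hit_eq μ ℱ U T t hsT') ω]
            have h2 := hit_bd t (s+1) (by omega) ω
            constructor
            · intro h; split_ifs at h with hc
              · exact hc
              · omega
            · intro h; rw [if_pos h]; omega
          rw [this]
          exact hn ▸ hA'
        · have : {ω | hit μ ℱ U T t s ω = n}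
              = {ω | snell μ ℱ U T t s ω = U t s ω}ᶜ ∩ {ω | hit μ ℱ U T t (s+1) ω = n} := by
            ext ω
            simp only [Set.mem_setOf_eq, Set.mem_inter_iff, Set.mem_compl_iff]
            rw [congrFun (hit_eq μ ℱ U T t hsT') ω]
            constructor
            · intro h; split_ifs at h with hc
              · omega
              · exact ⟨hc, h⟩
            · rintro ⟨h1, h2⟩; rw [if_neg h1]; exact h2
          rw [this]
          exact (ℱ.mono hn.le _ hA'.compl).inter (ih t (s+1) (by omega) (by omega) n)
    intro t s hts hsT
    exact natST_of_eq (key (T - s) t s hts (by omega))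
  -- the hitting time attains the Snell envelope
  have attained : ∀ t s, t ≤ s → s ≤ T →
      μ[(fun ω => U t (hit μ ℱ U T t s ω) ω)|ℱ s] =ᵐ[μ] snell μ ℱ U T t s := by
    have key : ∀ k t s, t ≤ s → s + k = T →
        μ[(fun ω => U t (hit μ ℱ U T t s ω) ω)|ℱ s] =ᵐ[μ] snell μ ℱ U T t s := by
      intro k
      induction k with
      | zero =>
        intro t s hts hsT
        have h' : s = T := by omega
        have hUsm : StronglyMeasurable[ℱ s] (U t s) := by
          have h1 := hUmeas t s; rwa [max_eq_right hts] at h1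
        have hfun : (fun ω => U t (hit μ ℱ U T t s ω) ω) = U t s :=
          funext fun ω => by rw [h', congrFun (hit_T μ ℱ U T t) ω]
        have hsnT : snell μ ℱ U T t s = U t s := by
          rw [h']; exact snell_T μ ℱ U T t
        rw [hfun, hsnT, condExp_of_stronglyMeasurable (hle s) hUsm
          (int_of_bdd _ (hUm t s).aestronglyMeasurable
            (Filter.Eventually.of_forall fun ω => hC _ _ ω))]
      | succ k ih =>
        intro t s hts hsT
        have hsT' : s < T := by omega
        set A : Set Ω := {ω | snell μ ℱ U T t s ω = U t s ω} with hAdef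
        have hA : MeasurableSet[ℱ s] A := by
          have hUsm : StronglyMeasurable[ℱ s] (U t s) := by
            have h1 := hUmeas t s; rwa [max_eq_right hts] at h1
          exact measurableSet_eq_fun (snell_sm t s hts hsT'.le).measurable hUsm.measurable
        have hint' : Integrable (fun ω => U t (hit μ ℱ U T t (s+1) ω) ω) μ :=
          intU (fun _ => t) _ measurable_const (st_meas (hit_st t (s+1) (by omega) (by omega)))
        have hsplit : (fun ω => U t (hit μ ℱ U T t s ω) ω)
            = (A.indicator (U t s) + Aᶜ.indicator (fun ω => U t (hit μ ℱ U T t (s+1) ω) ω)) := by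
          funext ω
          have hev := congrFun (hit_eq μ ℱ U T t hsT') ω
          by_cases h : ω ∈ A
          · have h' : snell μ ℱ U T t s ω = U t s ω := h
            simp only [Pi.add_apply, Set.indicator_of_mem h,
              Set.indicator_of_notMem (Set.notMem_compl_iff.2 h), add_zero]
            rw [hev, if_pos h']
          · have h' : ¬ snell μ ℱ U T t s ω = U t s ω := h
            simp only [Pi.add_apply, Set.indicator_of_notMem h,
              Set.indicator_of_mem (Set.mem_compl h), zero_add]
            rw [hev, if_neg h']
        have hd := cond_split t s hts A hA _ hint'
        have h2 : μ[(fun ω => U t (hit μ ℱ U T t (s+1) ω) ω)|ℱ s]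
            =ᵐ[μ] μ[snell μ ℱ U T t (s+1)|ℱ s] := by
          have htower :
              μ[(fun ω => U t (hit μ ℱ U T t (s+1) ω) ω)|ℱ s]
                =ᵐ[μ] μ[μ[(fun ω => U t (hit μ ℱ U T t (s+1) ω) ω)|ℱ (s+1)]|ℱ s] :=
            (condExp_condExp_of_le (ℱ.mono (Nat.le_succ s)) (hle (s+1))).symm
          exact htower.trans (condExp_congr_ae (ih t (s+1) (by omega) (by omega)))
        rw [hsplit]
        refine hd.trans ?_
        filter_upwards [h2] with ω hω
        have hsnell : snell μ ℱ U T t s ω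
            = max (U t s ω) ((μ[snell μ ℱ U T t (s+1)|ℱ s]) ω) :=
          congrFun (snell_eq μ ℱ U T t hsT') ω
        by_cases h : ω ∈ A
        · simp only [Set.indicator_of_mem h,
            Set.indicator_of_notMem (Set.notMem_compl_iff.2 h), add_zero]
          exact (Set.mem_setOf_eq ▸ h).symm
        · simp only [Set.indicator_of_notMem h,
            Set.indicator_of_mem (Set.mem_compl h), zero_add]
          rw [hω]
          have h' : ¬ snell μ ℱ U T t s ω = U t s ω := h
          rcases max_choice (U t s ω) ((μ[snell μ ℱ U T t (s+1)|ℱ s]) ω) with hmx | hmx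
          · exact absurd (hsnell.trans hmx) h'
          · exact (hsnell.trans hmx).symm
    intro t s hts hsT
    exact key (T - s) t s hts (by omega)
  -- identification of `S t` with a measurable function
  have S_eq : ∀ t, t < T → S t =ᵐ[μ] μ[snell μ ℱ U T t (t+1)|ℱ t] := by
    intro t ht
    apply Filter.EventuallyLE.antisymm
    · refine hSleast t ht _ ?_
      intro τ hτ hb
      have hdom := dominates t (t+1) (by omega) (by omega) τ hτ
        (fun ω => ⟨(hb ω).1, (hb ω).2⟩)
      have htower : μ[(fun ω => U t (τ ω) ω)|ℱ t]
          =ᵐ[μ] μ[μ[(fun ω => U t (τ ω) ω)|ℱ (t+1)]|ℱ t] :=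
        (condExp_condExp_of_le (ℱ.mono (Nat.le_succ t)) (hle (t+1))).symm
      exact htower.le.trans (condExp_mono integrable_condExp
        (snell_prop t (t+1) (by omega) (by omega)).1 hdom)
    · have hatt := attained t (t+1) (by omega) (by omega)
      have h1 := hSge t ht (hit μ ℱ U T t (t+1)) (hit_st t (t+1) (by omega) (by omega))
        (fun ω => hit_bd t (t+1) (by omega) ω)
      have h2 : μ[snell μ ℱ U T t (t+1)|ℱ t]
          =ᵐ[μ] μ[(fun ω => U t (hit μ ℱ U T t (t+1) ω) ω)|ℱ t] :=
        (condExp_congr_ae hatt.symm).trans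
          (condExp_condExp_of_le (ℱ.mono (Nat.le_succ t)) (hle (t+1)))
      exact h2.le.trans h1
  -- basic facts about ρd
  have hρdst : IsStoppingTime ℱ (fun ω => (ρd ω : WithTop ℕ)) ∧ ∀ ω, ρd ω ≤ T := by rwa [h𝒯] at hρd
  have absmax : ∀ a b : ℝ, |a| ≤ C → |b| ≤ C → |max a b| ≤ C := fun a b ha hb =>
    abs_le.2 ⟨le_trans (abs_le.1 ha).1 (le_max_left _ _),
      max_le (abs_le.1 ha).2 (abs_le.1 hb).2⟩
  -- a.e. identification of V1 and S with measurable versions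
  have haeV1 : ∀ᵐ ω ∂μ, ∀ k, k ≤ T → V1 k ω = (μ[(fun ω' => U (ρu k ω') k ω')|ℱ k]) ω := by
    rw [MeasureTheory.ae_all_iff]
    intro k
    by_cases hk : k ≤ T
    · filter_upwards [hρuopt k hk] with ω h _; exact h
    · exact Filter.Eventually.of_forall fun ω h => absurd h hk
  have haeS : ∀ᵐ ω ∂μ, ∀ k, k < T → S k ω = (μ[snell μ ℱ U T k (k+1)|ℱ k]) ω := by
    rw [MeasureTheory.ae_all_iff]
    intro k
    by_cases hk : k < T
    · filter_upwards [S_eq k hk] with ω h _; exact h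
    · exact Filter.Eventually.of_forall fun ω h => absurd h hk
  have haeV1bd : ∀ᵐ ω ∂μ, ∀ k, k ≤ T → |(μ[(fun ω' => U (ρu k ω') k ω')|ℱ k]) ω| ≤ C := by
    rw [MeasureTheory.ae_all_iff]
    intro k
    by_cases hk : k ≤ T
    · filter_upwards [cond_bdd _ k (intU _ _ (st_meas (hρu k hk).1) measurable_const)
        (Filter.Eventually.of_forall fun ω => hC _ _ ω)] with ω h _
      exact h
    · exact Filter.Eventually.of_forall fun ω h => absurd h hk
  have haeZbd : ∀ᵐ ω ∂μ, ∀ k, k < T → |(μ[snell μ ℱ U T k (k+1)|ℱ k]) ω| ≤ C := by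
    rw [MeasureTheory.ae_all_iff]
    intro k
    by_cases hk : k < T
    · filter_upwards [cond_bdd _ k (snell_prop k (k+1) (by omega) (by omega)).1
        (snell_prop k (k+1) (by omega) (by omega)).2] with ω h _
      exact h
    · exact Filter.Eventually.of_forall fun ω h => absurd h hk
  -- integrability of V2 k for k < T
  have hV2int : ∀ k, k < T → Integrable (V2 k) μ := by
    intro k hk
    have hmax_m : Measurable (fun ω => max ((μ[snell μ ℱ U T k (k+1)|ℱ k]) ω)
        ((μ[(fun ω' => U (ρu k ω') k ω')|ℱ k]) ω)) :=
      ((stronglyMeasurable_condExp.mono (hle k)).measurable.max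
        (stronglyMeasurable_condExp.mono (hle k)).measurable)
    have hae : V2 k =ᵐ[μ] fun ω => max ((μ[snell μ ℱ U T k (k+1)|ℱ k]) ω)
        ((μ[(fun ω' => U (ρu k ω') k ω')|ℱ k]) ω) := by
      filter_upwards [S_eq k hk, hρuopt k hk.le] with ω h1 h2
      rw [hV2 k hk ω, h1, h2]
    have hbd : ∀ᵐ ω ∂μ, |max ((μ[snell μ ℱ U T k (k+1)|ℱ k]) ω)
        ((μ[(fun ω' => U (ρu k ω') k ω')|ℱ k]) ω)| ≤ C := by
      filter_upwards [haeZbd, haeV1bd] with ω h1 h2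
      exact absmax _ _ (h1 k hk) (h2 k hk.le)
    exact (int_of_bdd _ hmax_m.stronglyMeasurable.aestronglyMeasurable hbd).congr hae.symm
  -- integrability and boundedness of the game payoff
  have gfact : ∀ σ : Ω → ℕ, IsStoppingTime ℱ (fun ω => (σ ω : WithTop ℕ)) → (∀ ω, σ ω ≤ T) →
      Integrable (fun ω => if σ ω ≤ ρd ω then V1 (σ ω) ω else V2 (ρd ω) ω) μ ∧
      ∫ ω, (if σ ω ≤ ρd ω then V1 (σ ω) ω else V2 (ρd ω) ω) ∂μ ≤ C := by
    intro σ hσ hσT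
    have h1sm : StronglyMeasurable
        (fun ω => (μ[(fun ω' => U (ρu (σ ω) ω') (σ ω) ω')|ℱ (σ ω)]) ω) :=
      stronglyMeasurable_comp_nat
        (fun a _ ω => (μ[(fun ω' => U (ρu a ω') a ω')|ℱ a]) ω)
        (fun a b => stronglyMeasurable_condExp.mono (hle a)) σ σ (st_meas hσ) (st_meas hσ)
    have h2sm : StronglyMeasurable (fun ω =>
        max ((μ[snell μ ℱ U T (ρd ω) (ρd ω + 1)|ℱ (ρd ω)]) ω)
          ((μ[(fun ω' => U (ρu (ρd ω) ω') (ρd ω) ω')|ℱ (ρd ω)]) ω)) :=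
      stronglyMeasurable_comp_nat
        (fun a _ ω => max ((μ[snell μ ℱ U T a (a + 1)|ℱ a]) ω)
          ((μ[(fun ω' => U (ρu a ω') a ω')|ℱ a]) ω))
        (fun a b => ((stronglyMeasurable_condExp.mono (hle a)).measurable.max
          (stronglyMeasurable_condExp.mono (hle a)).measurable).stronglyMeasurable)
        ρd ρd (st_meas hρdst.1) (st_meas hρdst.1)
    have hg'm : Measurable (fun ω => if σ ω ≤ ρd ω
        then (μ[(fun ω' => U (ρu (σ ω) ω') (σ ω) ω')|ℱ (σ ω)]) ω
        else max ((μ[snell μ ℱ U T (ρd ω) (ρd ω + 1)|ℱ (ρd ω)]) ω)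
          ((μ[(fun ω' => U (ρu (ρd ω) ω') (ρd ω) ω')|ℱ (ρd ω)]) ω)) :=
      Measurable.ite (measurableSet_le (st_meas hσ) (st_meas hρdst.1))
        h1sm.measurable h2sm.measurable
    have hgg' : (fun ω => if σ ω ≤ ρd ω then V1 (σ ω) ω else V2 (ρd ω) ω)
        =ᵐ[μ] (fun ω => if σ ω ≤ ρd ω
        then (μ[(fun ω' => U (ρu (σ ω) ω') (σ ω) ω')|ℱ (σ ω)]) ω
        else max ((μ[snell μ ℱ U T (ρd ω) (ρd ω + 1)|ℱ (ρd ω)]) ω)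
          ((μ[(fun ω' => U (ρu (ρd ω) ω') (ρd ω) ω')|ℱ (ρd ω)]) ω)) := by
      filter_upwards [haeV1, haeS] with ω h1 h2
      by_cases hc : σ ω ≤ ρd ω
      · rw [if_pos hc, if_pos hc, h1 (σ ω) (hσT ω)]
      · have hlt : ρd ω < T := by
          have := hσT ω; omega
        rw [if_neg hc, if_neg hc, hV2 (ρd ω) hlt ω, h2 (ρd ω) hlt, h1 (ρd ω) (by omega)]
    have hg'bd : ∀ᵐ ω ∂μ, |(if σ ω ≤ ρd ω
        then (μ[(fun ω' => U (ρu (σ ω) ω') (σ ω) ω')|ℱ (σ ω)]) ω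
        else max ((μ[snell μ ℱ U T (ρd ω) (ρd ω + 1)|ℱ (ρd ω)]) ω)
          ((μ[(fun ω' => U (ρu (ρd ω) ω') (ρd ω) ω')|ℱ (ρd ω)]) ω))| ≤ C := by
      filter_upwards [haeV1bd, haeZbd] with ω h1 h2
      by_cases hc : σ ω ≤ ρd ω
      · rw [if_pos hc]; exact h1 (σ ω) (hσT ω)
      · have hlt : ρd ω < T := by have := hσT ω; omega
        rw [if_neg hc]
        exact absmax _ _ (h2 (ρd ω) hlt) (h1 (ρd ω) (by omega))
    have hgint : Integrable (fun ω => if σ ω ≤ ρd ω then V1 (σ ω) ω else V2 (ρd ω) ω) μ :=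
      (int_of_bdd _ hg'm.stronglyMeasurable.aestronglyMeasurable hg'bd).congr hgg'.symm
    refine ⟨hgint, ?_⟩
    have hb : ∀ᵐ ω ∂μ, (if σ ω ≤ ρd ω then V1 (σ ω) ω else V2 (ρd ω) ω) ≤ C := by
      filter_upwards [hgg', hg'bd] with ω e1 e2
      rw [e1]
      exact (abs_le.1 e2).2
    calc ∫ ω, (if σ ω ≤ ρd ω then V1 (σ ω) ω else V2 (ρd ω) ω) ∂μ
        ≤ ∫ _ω, C ∂μ := integral_mono_ae hgint (integrable_const C) hb
      _ = C := by simp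
  have mem𝒯 : ∀ {f : Ω → ℕ}, f ∈ 𝒯 → IsStoppingTime ℱ (fun ω => (f ω : WithTop ℕ)) ∧ ∀ ω, f ω ≤ T := by
    intro f hf; rwa [h𝒯] at hf
  -- ρ* maps stopping times to stopping times
  have hρstar_mem : ∀ σ : Ω → ℕ, IsStoppingTime ℱ (fun ω => (σ ω : WithTop ℕ)) → (∀ ω, σ ω ≤ T) →
      IsStoppingTime ℱ (fun ω => (ρstar σ ω : WithTop ℕ)) ∧ ∀ ω, ρstar σ ω ≤ T := by
    intro σ hσ hσT
    constructor
    · apply natST_of_eq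
      intro n
      have hset : {ω | ρstar σ ω = n}
          = ({ω | ρd ω = n} ∩ {ω | σ ω ≤ n}ᶜ)
            ∪ ⋃ k, ({ω | σ ω = k} ∩ {ω | ρd ω < k}ᶜ ∩ {ω | ρu k ω = n}) := by
        ext ω
        simp only [Set.mem_setOf_eq, Set.mem_union, Set.mem_inter_iff, Set.mem_compl_iff,
          Set.mem_iUnion, hρstar σ ω]
        by_cases hc : ρd ω < σ ω
        · rw [if_pos hc]
          constructor
          · intro h; exact Or.inl ⟨h, by omega⟩
          · rintro (⟨h, _⟩ | ⟨k, ⟨⟨hk1, hk2⟩, hk3⟩⟩)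
            · exact h
            · exact absurd (hk1 ▸ hc) hk2
        · rw [if_neg hc]
          constructor
          · intro h; exact Or.inr ⟨σ ω, ⟨⟨rfl, hc⟩, h⟩⟩
          · rintro (⟨h1, h2⟩ | ⟨k, ⟨⟨hk1, hk2⟩, hk3⟩⟩)
            · omega
            · rw [← hk1] at hk3; exact hk3
      rw [hset]
      apply MeasurableSet.union
      · exact (natST_eq hρdst.1 n).inter (natST_le hσ n).compl
      · apply MeasurableSet.iUnion
        intro k
        by_cases hkn : k ≤ n ∧ k ≤ T
        · exact ((ℱ.mono hkn.1 _ (natST_eq hσ k)).inter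
            (ℱ.mono hkn.1 _ (natST_lt hρdst.1 k).compl)).inter
            (natST_eq (hρu k hkn.2).1 n)
        · have hempty : ({ω | σ ω = k} ∩ {ω | ρd ω < k}ᶜ ∩ {ω | ρu k ω = n}) = ∅ := by
            ext ω
            simp only [Set.mem_inter_iff, Set.mem_setOf_eq, Set.mem_compl_iff,
              Set.mem_empty_iff_false, iff_false]
            rintro ⟨⟨h1, h2⟩, h3⟩
            by_cases hkT : k ≤ T
            · have h4 := (hρu k hkT).2 ω; omega
            · have h5 := hσT ω; omega
          rw [hempty]; exact @MeasurableSet.empty _ (ℱ n)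
    · intro ω
      rw [hρstar]
      split_ifs with hc
      · exact hρdst.2 ω
      · exact ((hρu (σ ω) (hσT ω)).2 ω).2
  -- main estimate for a fixed stopping time τ
  have key : ∀ τ : Ω → ℕ, IsStoppingTime ℱ (fun ω => (τ ω : WithTop ℕ)) → (∀ ω, τ ω ≤ T) →
      ∫ ω, U (ρstar τ ω) (τ ω) ω ∂μ ≤ V := by
    intro τ hτ hτT
    have hρsm := hρstar_mem τ hτ hτT
    have hfint : Integrable (fun ω => U (ρstar τ ω) (τ ω) ω) μ :=
      intU _ _ (st_meas hρsm.1) (st_meas hτ)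
    have hgint := (gfact τ hτ hτT).1
    have hEm : MeasurableSet {ω | τ ω ≤ ρd ω} :=
      measurableSet_le (st_meas hτ) (st_meas hρdst.1)
    have hBm : ∀ k, MeasurableSet[ℱ k] ({ω | τ ω = k} ∩ {ω | τ ω ≤ ρd ω}) := by
      intro k
      have he : {ω | τ ω = k} ∩ {ω | τ ω ≤ ρd ω} = {ω | τ ω = k} ∩ {ω | ρd ω < k}ᶜ := by
        ext ω
        simp only [Set.mem_inter_iff, Set.mem_setOf_eq, Set.mem_compl_iff]
        omega
      rw [he]
      exact (natST_eq hτ k).inter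
        (natST_lt hρdst.1 k).compl
    have hAm : ∀ k, MeasurableSet[ℱ k] ({ω | ρd ω = k} ∩ {ω | τ ω ≤ ρd ω}ᶜ) := by
      intro k
      have he : {ω | ρd ω = k} ∩ {ω | τ ω ≤ ρd ω}ᶜ = {ω | ρd ω = k} ∩ {ω | τ ω ≤ k}ᶜ := by
        ext ω
        simp only [Set.mem_inter_iff, Set.mem_setOf_eq, Set.mem_compl_iff]
        omega
      rw [he]
      exact (natST_eq hρdst.1 k).inter (natST_le hτ k).compl
    have hEB : {ω | τ ω ≤ ρd ω} = ⋃ k ∈ Finset.range (T+1), ({ω | τ ω = k} ∩ {ω | τ ω ≤ ρd ω}) := by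
      ext ω
      simp only [Set.mem_iUnion, Set.mem_inter_iff, Set.mem_setOf_eq, Finset.mem_range]
      constructor
      · intro h
        exact ⟨τ ω, by have := hτT ω; omega, rfl, h⟩
      · rintro ⟨k, _, _, h⟩; exact h
    have hEA : {ω | τ ω ≤ ρd ω}ᶜ
        = ⋃ k ∈ Finset.range T, ({ω | ρd ω = k} ∩ {ω | τ ω ≤ ρd ω}ᶜ) := by
      ext ω
      simp only [Set.mem_iUnion, Set.mem_inter_iff, Set.mem_setOf_eq, Finset.mem_range,
        Set.mem_compl_iff]
      constructor
      · intro h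
        exact ⟨ρd ω, by have := hτT ω; omega, rfl, h⟩
      · rintro ⟨k, _, _, h⟩; exact h
    have hBdisj : Set.Pairwise ↑(Finset.range (T+1))
        (Function.onFun Disjoint (fun k => {ω | τ ω = k} ∩ {ω | τ ω ≤ ρd ω})) :=
      fun i _ j _ hij => Set.disjoint_left.2 fun ω hi' hj' => hij (hi'.1.symm.trans hj'.1)
    have hAdisj : Set.Pairwise ↑(Finset.range T)
        (Function.onFun Disjoint (fun k => {ω | ρd ω = k} ∩ {ω | τ ω ≤ ρd ω}ᶜ)) :=
      fun i _ j _ hij => Set.disjoint_left.2 fun ω hi' hj' => hij (hi'.1.symm.trans hj'.1)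
    -- equality on each B k
    have hBk : ∀ k ∈ Finset.range (T+1),
        ∫ ω in {ω | τ ω = k} ∩ {ω | τ ω ≤ ρd ω}, U (ρstar τ ω) (τ ω) ω ∂μ
          = ∫ ω in {ω | τ ω = k} ∩ {ω | τ ω ≤ ρd ω},
              (if τ ω ≤ ρd ω then V1 (τ ω) ω else V2 (ρd ω) ω) ∂μ := by
      intro k hk
      rw [Finset.mem_range] at hk
      have hkT : k ≤ T := by omega
      have e1 : ∫ ω in {ω | τ ω = k} ∩ {ω | τ ω ≤ ρd ω}, U (ρstar τ ω) (τ ω) ω ∂μ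
          = ∫ ω in {ω | τ ω = k} ∩ {ω | τ ω ≤ ρd ω}, U (ρu k ω) k ω ∂μ := by
        refine setIntegral_congr_fun (hle k _ (hBm k)) ?_
        rintro ω ⟨hω1, hω2⟩
        have hω1' : τ ω = k := hω1
        have hω2' : τ ω ≤ ρd ω := hω2
        show U (ρstar τ ω) (τ ω) ω = U (ρu k ω) k ω
        rw [hρstar, if_neg (by omega), hω1']
      have e2 : ∫ ω in {ω | τ ω = k} ∩ {ω | τ ω ≤ ρd ω}, U (ρu k ω) k ω ∂μ
          = ∫ ω in {ω | τ ω = k} ∩ {ω | τ ω ≤ ρd ω},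
              (μ[(fun ω' => U (ρu k ω') k ω')|ℱ k]) ω ∂μ :=
        (setIntegral_condExp (hle k)
          (intU _ _ (st_meas (hρu k hkT).1) measurable_const) (hBm k)).symm
      have e3 : ∫ ω in {ω | τ ω = k} ∩ {ω | τ ω ≤ ρd ω},
              (μ[(fun ω' => U (ρu k ω') k ω')|ℱ k]) ω ∂μ
          = ∫ ω in {ω | τ ω = k} ∩ {ω | τ ω ≤ ρd ω}, V1 k ω ∂μ :=
        setIntegral_congr_ae (hle k _ (hBm k))
          ((hρuopt k hkT).mono fun ω h _ => h.symm)
      have e4 : ∫ ω in {ω | τ ω = k} ∩ {ω | τ ω ≤ ρd ω}, V1 k ω ∂μ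
          = ∫ ω in {ω | τ ω = k} ∩ {ω | τ ω ≤ ρd ω},
              (if τ ω ≤ ρd ω then V1 (τ ω) ω else V2 (ρd ω) ω) ∂μ := by
        refine setIntegral_congr_fun (hle k _ (hBm k)) ?_
        rintro ω ⟨hω1, hω2⟩
        have hω1' : τ ω = k := hω1
        have hω2' : τ ω ≤ ρd ω := hω2
        show V1 k ω = if τ ω ≤ ρd ω then V1 (τ ω) ω else V2 (ρd ω) ω
        rw [if_pos hω2', hω1']
      rw [e1, e2, e3, e4]
    -- inequality on each A k
    have hAk : ∀ k ∈ Finset.range T,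
        ∫ ω in {ω | ρd ω = k} ∩ {ω | τ ω ≤ ρd ω}ᶜ, U (ρstar τ ω) (τ ω) ω ∂μ
          ≤ ∫ ω in {ω | ρd ω = k} ∩ {ω | τ ω ≤ ρd ω}ᶜ,
              (if τ ω ≤ ρd ω then V1 (τ ω) ω else V2 (ρd ω) ω) ∂μ := by
      intro k hk
      rw [Finset.mem_range] at hk
      have hτ'st : IsStoppingTime ℱ (fun ω => ((max (τ ω) (k+1) : ℕ) : WithTop ℕ)) :=
        natST_max_const hτ (k+1)
      have hτ'b : ∀ ω, k+1 ≤ max (τ ω) (k+1) ∧ max (τ ω) (k+1) ≤ T :=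
        fun ω => ⟨le_max_right _ _, max_le (hτT ω) (by omega)⟩
      have e1 : ∫ ω in {ω | ρd ω = k} ∩ {ω | τ ω ≤ ρd ω}ᶜ, U (ρstar τ ω) (τ ω) ω ∂μ
          = ∫ ω in {ω | ρd ω = k} ∩ {ω | τ ω ≤ ρd ω}ᶜ, U k (max (τ ω) (k+1)) ω ∂μ := by
        refine setIntegral_congr_fun (hle k _ (hAm k)) ?_
        rintro ω ⟨hω1, hω2⟩
        have hω1' : ρd ω = k := hω1
        have hω2' : ¬ τ ω ≤ ρd ω := hω2
        have hmx : max (τ ω) (k+1) = τ ω := max_eq_left (by omega)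
        show U (ρstar τ ω) (τ ω) ω = U k (max (τ ω) (k+1)) ω
        rw [hmx, hρstar, if_pos (by omega), hω1']
      have e2 : ∫ ω in {ω | ρd ω = k} ∩ {ω | τ ω ≤ ρd ω}ᶜ, U k (max (τ ω) (k+1)) ω ∂μ
          = ∫ ω in {ω | ρd ω = k} ∩ {ω | τ ω ≤ ρd ω}ᶜ,
              (μ[(fun ω' => U k (max (τ ω') (k+1)) ω')|ℱ k]) ω ∂μ :=
        (setIntegral_condExp (hle k)
          (intU (fun _ => k) _ measurable_const (st_meas hτ'st)) (hAm k)).symm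
      have e3 : ∫ ω in {ω | ρd ω = k} ∩ {ω | τ ω ≤ ρd ω}ᶜ,
              (μ[(fun ω' => U k (max (τ ω') (k+1)) ω')|ℱ k]) ω ∂μ
          ≤ ∫ ω in {ω | ρd ω = k} ∩ {ω | τ ω ≤ ρd ω}ᶜ, V2 k ω ∂μ :=
        setIntegral_mono_ae integrable_condExp.integrableOn (hV2int k hk).integrableOn
          ((hSge k hk _ hτ'st hτ'b).trans (Filter.Eventually.of_forall fun ω => by
            rw [hV2 k hk ω]; exact le_max_left _ _))
      have e4 : ∫ ω in {ω | ρd ω = k} ∩ {ω | τ ω ≤ ρd ω}ᶜ, V2 k ω ∂μ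
          = ∫ ω in {ω | ρd ω = k} ∩ {ω | τ ω ≤ ρd ω}ᶜ,
              (if τ ω ≤ ρd ω then V1 (τ ω) ω else V2 (ρd ω) ω) ∂μ := by
        refine setIntegral_congr_fun (hle k _ (hAm k)) ?_
        rintro ω ⟨hω1, hω2⟩
        have hω1' : ρd ω = k := hω1
        have hω2' : ¬ τ ω ≤ ρd ω := hω2
        show V2 k ω = if τ ω ≤ ρd ω then V1 (τ ω) ω else V2 (ρd ω) ω
        rw [if_neg hω2', hω1']
      rw [e1, e2]
      exact e3.trans (le_of_eq e4)
    -- assemble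
    have hmain : ∫ ω, U (ρstar τ ω) (τ ω) ω ∂μ
        ≤ ∫ ω, (if τ ω ≤ ρd ω then V1 (τ ω) ω else V2 (ρd ω) ω) ∂μ := by
      rw [← integral_add_compl hEm hfint, ← integral_add_compl hEm hgint]
      have d1 : ∫ ω in {ω | τ ω ≤ ρd ω}, U (ρstar τ ω) (τ ω) ω ∂μ
          = ∑ k ∈ Finset.range (T+1),
              ∫ ω in {ω | τ ω = k} ∩ {ω | τ ω ≤ ρd ω}, U (ρstar τ ω) (τ ω) ω ∂μ := by
        conv_lhs => rw [hEB]
        exact integral_biUnion_finset _ (fun i _ => hle i _ (hBm i)) hBdisj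
          (fun i _ => hfint.integrableOn)
      have d2 : ∫ ω in {ω | τ ω ≤ ρd ω}, (if τ ω ≤ ρd ω then V1 (τ ω) ω else V2 (ρd ω) ω) ∂μ
          = ∑ k ∈ Finset.range (T+1), ∫ ω in {ω | τ ω = k} ∩ {ω | τ ω ≤ ρd ω},
              (if τ ω ≤ ρd ω then V1 (τ ω) ω else V2 (ρd ω) ω) ∂μ := by
        conv_lhs => rw [hEB]
        exact integral_biUnion_finset _ (fun i _ => hle i _ (hBm i)) hBdisj
          (fun i _ => hgint.integrableOn)
      have d3 : ∫ ω in {ω | τ ω ≤ ρd ω}ᶜ, U (ρstar τ ω) (τ ω) ω ∂μ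
          = ∑ k ∈ Finset.range T,
              ∫ ω in {ω | ρd ω = k} ∩ {ω | τ ω ≤ ρd ω}ᶜ, U (ρstar τ ω) (τ ω) ω ∂μ := by
        conv_lhs => rw [hEA]
        exact integral_biUnion_finset _ (fun i _ => hle i _ (hAm i)) hAdisj
          (fun i _ => hfint.integrableOn)
      have d4 : ∫ ω in {ω | τ ω ≤ ρd ω}ᶜ, (if τ ω ≤ ρd ω then V1 (τ ω) ω else V2 (ρd ω) ω) ∂μ
          = ∑ k ∈ Finset.range T, ∫ ω in {ω | ρd ω = k} ∩ {ω | τ ω ≤ ρd ω}ᶜ,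
              (if τ ω ≤ ρd ω then V1 (τ ω) ω else V2 (ρd ω) ω) ∂μ := by
        conv_lhs => rw [hEA]
        exact integral_biUnion_finset _ (fun i _ => hle i _ (hAm i)) hAdisj
          (fun i _ => hgint.integrableOn)
      rw [d1, d2, d3, d4]
      exact add_le_add (le_of_eq (Finset.sum_congr rfl hBk)) (Finset.sum_le_sum hAk)
    have hmem : τ ∈ 𝒯 := by rw [h𝒯]; exact ⟨hτ, hτT⟩
    have hbdd : BddAbove (Set.range fun σ : 𝒯 =>
        ∫ ω, (if σ.1 ω ≤ ρd ω then V1 (σ.1 ω) ω else V2 (ρd ω) ω) ∂μ) := by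
      refine ⟨C, ?_⟩
      rintro x ⟨σ, rfl⟩
      exact (gfact σ.1 (mem𝒯 σ.2).1 (mem𝒯 σ.2).2).2
    have hfin := le_ciSup hbdd (⟨τ, hmem⟩ : 𝒯)
    rw [hρdopt]
    exact hmain.trans hfin
  -- conclusion
  have hTne : Nonempty ↥𝒯 :=
    ⟨⟨fun _ => T, by rw [h𝒯]; exact ⟨isStoppingTime_const ℱ T, fun _ => le_rfl⟩⟩⟩
  have part1 : (⨆ τ : 𝒯, ∫ ω, U (ρstar τ.1 ω) (τ.1 ω) ω ∂μ) ≤ V := by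
    refine ciSup_le ?_
    rintro ⟨τ, hτmem⟩
    have h := hτmem
    rw [h𝒯] at h
    exact key τ h.1 h.2
  refine ⟨part1, ?_⟩
  have hTII : TypeII ρstar := by
    rw [hTypeII]
    constructor
    · intro σ hσ
      rw [h𝒯] at hσ ⊢
      exact hρstar_mem σ hσ.1 hσ.2
    · intro σ₁ h1 σ₂ h2 ω
      rw [h𝒯] at h1 h2
      have hb1 := (hρu (σ₁ ω) (h1.2 ω)).2 ω
      have hb2 := (hρu (σ₂ ω) (h2.2 ω)).2 ω
      rw [hρstar σ₁ ω, hρstar σ₂ ω]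
      by_cases hc1 : ρd ω < σ₁ ω <;> by_cases hc2 : ρd ω < σ₂ ω
      · rw [if_pos hc1, if_pos hc2]
        exact Or.inl ⟨rfl, lt_min hc1 hc2⟩
      · rw [if_pos hc1, if_neg hc2]
        exact Or.inr (le_min ((min_le_right _ _).trans (not_lt.1 hc2))
          ((min_le_right _ _).trans hb2.1))
      · rw [if_neg hc1, if_pos hc2]
        exact Or.inr (le_min ((min_le_left _ _).trans hb1.1)
          ((min_le_left _ _).trans (not_lt.1 hc1)))
      · rw [if_neg hc1, if_neg hc2]
        exact Or.inr (le_min ((min_le_left _ _).trans hb1.1)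
          ((min_le_right _ _).trans hb2.1))
  have hbddB : BddBelow (Set.range fun ρ : {ρ : (Ω → ℕ) → Ω → ℕ // TypeII ρ} =>
      ⨆ τ : 𝒯, ∫ ω, U (ρ.1 τ.1 ω) (τ.1 ω) ω ∂μ) := by
    refine ⟨-C, ?_⟩
    rintro x ⟨ρ, rfl⟩
    obtain ⟨hmap, -⟩ := (hTypeII ρ.1).1 ρ.2
    have hInt : ∀ σ : 𝒯, Integrable (fun ω => U (ρ.1 σ.1 ω) (σ.1 ω) ω) μ := by
      intro σ
      exact intU _ _ (st_meas (mem𝒯 (hmap σ.1 σ.2)).1) (st_meas (mem𝒯 σ.2).1)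
    have hub : BddAbove (Set.range fun σ : 𝒯 => ∫ ω, U (ρ.1 σ.1 ω) (σ.1 ω) ω ∂μ) := by
      refine ⟨C, ?_⟩
      rintro y ⟨σ, rfl⟩
      calc ∫ ω, U (ρ.1 σ.1 ω) (σ.1 ω) ω ∂μ
          ≤ ∫ _ω, C ∂μ := integral_mono_ae (hInt σ) (integrable_const C)
            (Filter.Eventually.of_forall fun ω => (abs_le.1 (hC _ _ ω)).2)
        _ = C := by simp
    have hlow : -C ≤ ∫ ω, U (ρ.1 (Classical.arbitrary ↥𝒯).1 ω)
        ((Classical.arbitrary ↥𝒯).1 ω) ω ∂μ := by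
      calc (-C : ℝ) = ∫ _ω, (-C : ℝ) ∂μ := by simp
        _ ≤ _ := integral_mono_ae (integrable_const (-C)) (hInt _)
            (Filter.Eventually.of_forall fun ω => (abs_le.1 (hC _ _ ω)).1)
    exact hlow.trans (le_ciSup hub (Classical.arbitrary ↥𝒯))
  exact le_trans (ciInf_le hbddB ⟨ρstar, hTII⟩) part1
end

section
/- In the main-theorem setting, for every Type II strategy ρ ∈ 𝕋^{ii}: sup_{τ∈𝒯} E[U(ρ(τ),τ)] ≥ E[U(ρ(τ*(ρ)), τ*(ρ))] ≥ V, where τ*(ρ) := τ_d 1_{τ_d≤ρ(τ_d)} + τ_u(ρ(τ_d)) 1_{τ_d>ρ(τ_d)}. Consequently inf_{ρ∈𝕋^{ii}} sup_{τ∈𝒯} E[U(ρ(τ),τ)] ≥ V. -/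
open MeasureTheory
open Filter


section Helpers
open Filter
variable {Ω : Type*} {m : MeasurableSpace Ω} {μ : Measure Ω} [IsProbabilityMeasure μ]

lemma bdd_integrable {f : Ω → ℝ} {C : ℝ} (hf : AEStronglyMeasurable f μ)
    (hb : ∀ᵐ ω ∂μ, |f ω| ≤ C) : Integrable f μ :=
  ⟨hf, HasFiniteIntegral.of_bounded (C := C) (by simpa [Real.norm_eq_abs] using hb)⟩

lemma exists_essInf (S : Set (Ω → ℝ)) (C : ℝ) (hne : S.Nonempty)
    (hmeas : ∀ g ∈ S, Measurable g)
    (hbd : ∀ g ∈ S, ∀ᵐ ω ∂μ, |g ω| ≤ C)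
    (hdir : ∀ g₁ ∈ S, ∀ g₂ ∈ S, ∃ g₃ ∈ S, g₃ ≤ᵐ[μ] g₁ ∧ g₃ ≤ᵐ[μ] g₂) :
    ∃ W : Ω → ℝ, Measurable W ∧ Integrable W μ ∧ (∀ᵐ ω ∂μ, |W ω| ≤ C) ∧
      (∀ g ∈ S, W ≤ᵐ[μ] g) ∧ ∀ Z : Ω → ℝ, (∀ g ∈ S, Z ≤ᵐ[μ] g) → Z ≤ᵐ[μ] W := by
  have hint : ∀ g ∈ S, Integrable g μ := fun g hg =>
    bdd_integrable ((hmeas g hg).aestronglyMeasurable) (hbd g hg)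
  haveI : Nonempty S := hne.to_subtype
  set d : ℝ := ⨅ g : S, ∫ ω, (g : Ω → ℝ) ω ∂μ with hd
  have hlb : ∀ g ∈ S, -C ≤ ∫ ω, g ω ∂μ := by
    intro g hg
    have h1 : (fun _ : Ω => -C) ≤ᵐ[μ] g := (hbd g hg).mono fun ω h => (abs_le.1 h).1
    calc -C = ∫ _ : Ω, (-C) ∂μ := by simp
    _ ≤ ∫ ω, g ω ∂μ := integral_mono_ae (integrable_const _) (hint g hg) h1
  have hBdd : BddBelow (Set.range fun g : S => ∫ ω, (g : Ω → ℝ) ω ∂μ) := by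
    refine ⟨-C, ?_⟩; rintro x ⟨g, rfl⟩; exact hlb g g.2
  have hd_le : ∀ g ∈ S, d ≤ ∫ ω, g ω ∂μ := fun g hg => ciInf_le hBdd ⟨g, hg⟩
  have hseq : ∀ n : ℕ, ∃ g, g ∈ S ∧ ∫ ω, g ω ∂μ < d + 1 / (n + 1) := by
    intro n
    have hlt : d < d + 1 / (n + 1 : ℝ) := by
      have : (0:ℝ) < 1 / (n + 1) := by positivity
      linarith
    obtain ⟨⟨g, hg⟩, hglt⟩ := exists_lt_of_ciInf_lt (hd ▸ hlt)
    exact ⟨g, hg, hglt⟩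
  choose h hhS hhlt using hseq
  -- recursive antitone sequence
  have H : ∀ g : Ω → ℝ, g ∈ S → ∀ n : ℕ,
      ∃ g', g' ∈ S ∧ g' ≤ᵐ[μ] g ∧ g' ≤ᵐ[μ] h (n + 1) := by
    intro g hg n
    obtain ⟨g', h1, h2, h3⟩ := hdir g hg (h (n + 1)) (hhS (n + 1))
    exact ⟨g', h1, h2, h3⟩
  choose F hF1 hF2 hF3 using H
  classical
  set σ : ℕ → Ω → ℝ := fun n =>
    Nat.rec (h 0) (fun n prev => if hp : prev ∈ S then F prev hp n else prev) n with hσdef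
  have hmem : ∀ n, σ n ∈ S := by
    intro n
    induction n with
    | zero => exact hhS 0
    | succ n ih =>
      show (if hp : σ n ∈ S then F (σ n) hp n else σ n) ∈ S
      rw [dif_pos ih]; exact hF1 _ ih n
  have hstep : ∀ n, σ (n + 1) ≤ᵐ[μ] σ n ∧ σ (n + 1) ≤ᵐ[μ] h (n + 1) := by
    intro n
    have h1 : σ (n + 1) = F (σ n) (hmem n) n := by
      show (if hp : σ n ∈ S then F (σ n) hp n else σ n) = _
      rw [dif_pos (hmem n)]
    rw [h1]; exact ⟨hF2 _ _ n, hF3 _ _ n⟩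
  have hA : ∀ᵐ ω ∂μ, ∀ n, σ (n + 1) ω ≤ σ n ω := ae_all_iff.2 fun n => (hstep n).1
  have hB : ∀ᵐ ω ∂μ, ∀ n, |σ n ω| ≤ C := ae_all_iff.2 fun n => hbd _ (hmem n)
  set W : Ω → ℝ := fun ω => ⨅ n, σ n ω with hW
  have hWmeas : Measurable W := Measurable.iInf fun n => hmeas _ (hmem n)
  have hWbd : ∀ᵐ ω ∂μ, |W ω| ≤ C := by
    filter_upwards [hB] with ω hb
    have hbb : BddBelow (Set.range fun n => σ n ω) := by
      refine ⟨-C, ?_⟩; rintro x ⟨n, rfl⟩; exact (abs_le.1 (hb n)).1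
    have h1 : W ω ≤ σ 0 ω := ciInf_le hbb 0
    have h2 : -C ≤ W ω := le_ciInf fun n => (abs_le.1 (hb n)).1
    exact abs_le.2 ⟨h2, h1.trans (abs_le.1 (hb 0)).2⟩
  have hWint : Integrable W μ := bdd_integrable hWmeas.aestronglyMeasurable hWbd
  have hTend : ∀ᵐ ω ∂μ, Tendsto (fun n => σ n ω) atTop (nhds (W ω)) := by
    filter_upwards [hA, hB] with ω ha hb
    have hanti : Antitone fun n => σ n ω := antitone_nat_of_succ_le ha
    exact tendsto_atTop_ciInf hanti ⟨-C, by rintro x ⟨n, rfl⟩; exact (abs_le.1 (hb n)).1⟩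
  have hIntTend : Tendsto (fun n => ∫ ω, σ n ω ∂μ) atTop (nhds (∫ ω, W ω ∂μ)) := by
    refine tendsto_integral_of_dominated_convergence (fun _ => C)
      (fun n => (hmeas _ (hmem n)).aestronglyMeasurable) (integrable_const _)
      (fun n => (hbd _ (hmem n)).mono fun ω h => by simpa [Real.norm_eq_abs] using h) hTend
  have hσle : ∀ n, ∫ ω, σ n ω ∂μ ≤ d + 1 / (n + 1) := by
    intro n
    cases n with
    | zero => exact (hhlt 0).le
    | succ n =>
      exact (integral_mono_ae (hint _ (hmem (n+1))) (hint _ (hhS (n+1))) (hstep n).2).trans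
        (hhlt (n+1)).le
  have hdTend : Tendsto (fun n : ℕ => ∫ ω, σ n ω ∂μ) atTop (nhds d) := by
    have h1 : Tendsto (fun n : ℕ => d + 1 / (n + 1 : ℝ)) atTop (nhds d) := by
      have := tendsto_one_div_add_atTop_nhds_zero_nat (𝕜 := ℝ)
      simpa using tendsto_const_nhds.add this
    exact tendsto_of_tendsto_of_tendsto_of_le_of_le tendsto_const_nhds h1
      (fun n => hd_le _ (hmem n)) hσle
  have hWd : ∫ ω, W ω ∂μ = d := tendsto_nhds_unique hIntTend hdTend
  refine ⟨W, hWmeas, hWint, hWbd, ?_, ?_⟩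
  · intro g hg
    have hminint : Integrable (fun ω => min (W ω) (g ω)) μ := by
      refine bdd_integrable (C := C) ((hWmeas.min (hmeas g hg)).aestronglyMeasurable) ?_
      filter_upwards [hWbd, hbd g hg] with ω h1 h2
      rcases min_choice (W ω) (g ω) with h | h <;> rw [h] <;> assumption
    have hminge : d ≤ ∫ ω, min (W ω) (g ω) ∂μ := by
      have hn : ∀ n, d ≤ ∫ ω, min (σ n ω) (g ω) ∂μ := by
        intro n
        obtain ⟨u, huS, hu1, hu2⟩ := hdir (σ n) (hmem n) g hg
        have hle : u ≤ᵐ[μ] fun ω => min (σ n ω) (g ω) := by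
          filter_upwards [hu1, hu2] with ω h1 h2; exact le_min h1 h2
        have hmint : Integrable (fun ω => min (σ n ω) (g ω)) μ := by
          refine bdd_integrable (C := C) (((hmeas _ (hmem n)).min (hmeas g hg)).aestronglyMeasurable) ?_
          filter_upwards [hbd _ (hmem n), hbd g hg] with ω h1 h2
          rcases min_choice (σ n ω) (g ω) with h | h <;> rw [h] <;> assumption
        exact (hd_le u huS).trans (integral_mono_ae (hint u huS) hmint hle)
      have hTend2 : Tendsto (fun n => ∫ ω, min (σ n ω) (g ω) ∂μ) atTop
          (nhds (∫ ω, min (W ω) (g ω) ∂μ)) := by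
        refine tendsto_integral_of_dominated_convergence (fun _ => C)
          (fun n => ((hmeas _ (hmem n)).min (hmeas g hg)).aestronglyMeasurable)
          (integrable_const _) ?_ ?_
        · intro n
          filter_upwards [hbd _ (hmem n), hbd g hg] with ω h1 h2
          rcases min_choice (σ n ω) (g ω) with h | h <;>
            simp only [Real.norm_eq_abs, h] <;> assumption
        · filter_upwards [hTend] with ω hω
          exact hω.min tendsto_const_nhds
      exact ge_of_tendsto hTend2 (Eventually.of_forall hn)
    have hminle : ∫ ω, min (W ω) (g ω) ∂μ ≤ ∫ ω, W ω ∂μ :=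
      integral_mono_ae hminint hWint (Eventually.of_forall fun ω => min_le_left _ _)
    have hzero : ∫ ω, (W ω - min (W ω) (g ω)) ∂μ = 0 := by
      rw [integral_sub hWint hminint]
      linarith
    have hnonneg : 0 ≤ᵐ[μ] fun ω => W ω - min (W ω) (g ω) :=
      Eventually.of_forall fun ω => by simp [sub_nonneg, min_le_left]
    have := (integral_eq_zero_iff_of_nonneg_ae hnonneg (hWint.sub hminint)).1 hzero
    filter_upwards [this] with ω hω
    have : min (W ω) (g ω) = W ω := by
      have : W ω - min (W ω) (g ω) = 0 := hω
      linarith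
    calc W ω = min (W ω) (g ω) := this.symm
    _ ≤ g ω := min_le_right _ _
  · intro Z hZ
    have h1 : ∀ᵐ ω ∂μ, ∀ n, Z ω ≤ σ n ω := ae_all_iff.2 fun n => hZ _ (hmem n)
    filter_upwards [h1] with ω hω
    exact le_ciInf hω

lemma exists_essSup (S : Set (Ω → ℝ)) (C : ℝ) (hne : S.Nonempty)
    (hmeas : ∀ g ∈ S, Measurable g)
    (hbd : ∀ g ∈ S, ∀ᵐ ω ∂μ, |g ω| ≤ C)
    (hdir : ∀ g₁ ∈ S, ∀ g₂ ∈ S, ∃ g₃ ∈ S, g₁ ≤ᵐ[μ] g₃ ∧ g₂ ≤ᵐ[μ] g₃) :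
    ∃ W : Ω → ℝ, Measurable W ∧ Integrable W μ ∧ (∀ᵐ ω ∂μ, |W ω| ≤ C) ∧
      (∀ g ∈ S, g ≤ᵐ[μ] W) ∧ ∀ Z : Ω → ℝ, (∀ g ∈ S, g ≤ᵐ[μ] Z) → W ≤ᵐ[μ] Z := by
  obtain ⟨W, h1, h2, h3, h4, h5⟩ := exists_essInf (μ := μ) (Neg.neg '' S) C
    (hne.image _)
    (by rintro _ ⟨g, hg, rfl⟩; exact (hmeas g hg).neg)
    (by rintro _ ⟨g, hg, rfl⟩; filter_upwards [hbd g hg] with ω h; simpa using h)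
    (by
      rintro _ ⟨g₁, hg₁, rfl⟩ _ ⟨g₂, hg₂, rfl⟩
      obtain ⟨g₃, hg₃, hle₁, hle₂⟩ := hdir g₁ hg₁ g₂ hg₂
      refine ⟨-g₃, ⟨g₃, hg₃, rfl⟩, ?_, ?_⟩
      · filter_upwards [hle₁] with ω h; simpa using h
      · filter_upwards [hle₂] with ω h; simpa using h)
  refine ⟨-W, h1.neg, h2.neg, ?_, ?_, ?_⟩
  · filter_upwards [h3] with ω h; simpa [abs_neg] using h
  · intro g hg
    have := h4 (-g) ⟨g, hg, rfl⟩
    filter_upwards [this] with ω h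
    have : W ω ≤ -g ω := h
    simpa using neg_le_neg this
  · intro Z hZ
    have : (-Z : Ω → ℝ) ≤ᵐ[μ] W := by
      refine h5 (-Z) ?_
      rintro _ ⟨g, hg, rfl⟩
      filter_upwards [hZ g hg] with ω h
      simpa using neg_le_neg h
    filter_upwards [this] with ω h
    have : -Z ω ≤ W ω := h
    simpa using neg_le_neg this

lemma meas_nat_comp {W : ℕ → Ω → ℝ} {η : Ω → ℕ} {T : ℕ}
    (hW : ∀ t, t ≤ T → Measurable (W t)) (hη : Measurable η) (hηT : ∀ ω, η ω ≤ T) :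
    Measurable fun ω => W (η ω) ω := by
  classical
  have hrep : (fun ω => W (η ω) ω) =
      fun ω => ∑ t ∈ Finset.range (T + 1), if η ω = t then W t ω else 0 := by
    funext ω
    rw [Finset.sum_eq_single (η ω)]
    · simp
    · intro t _ ht; rw [if_neg fun h => ht h.symm]
    · intro h; exact absurd (Finset.mem_range.2 (Nat.lt_succ_of_le (hηT ω))) h
  rw [hrep]
  refine Finset.measurable_sum _ fun t ht => Measurable.ite ?_ (hW t (Nat.lt_succ_iff.1 (Finset.mem_range.1 ht))) measurable_const
  exact hη (measurableSet_singleton t)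

lemma nst_iff {ℱ : Filtration ℕ m} {τ : Ω → ℕ} :
    IsStoppingTime ℱ (fun ω => (τ ω : WithTop ℕ)) ↔ ∀ n : ℕ, MeasurableSet[ℱ n] {ω | τ ω ≤ n} := by
  simp [IsStoppingTime]

lemma nst_le {ℱ : Filtration ℕ m} {τ : Ω → ℕ} (h : IsStoppingTime ℱ (fun ω => (τ ω : WithTop ℕ)))
    (n : ℕ) : MeasurableSet[ℱ n] {ω | τ ω ≤ n} := nst_iff.1 h n

lemma nst_eq {ℱ : Filtration ℕ m} {τ : Ω → ℕ} (h : IsStoppingTime ℱ (fun ω => (τ ω : WithTop ℕ)))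
    (n : ℕ) : MeasurableSet[ℱ n] {ω | τ ω = n} := by
  have := h.measurableSet_eq n; simpa using this

lemma nst_lt {ℱ : Filtration ℕ m} {τ : Ω → ℕ} (h : IsStoppingTime ℱ (fun ω => (τ ω : WithTop ℕ)))
    (n : ℕ) : MeasurableSet[ℱ n] {ω | τ ω < n} := by
  have := h.measurableSet_lt n; simpa using this

lemma nst_max_const {ℱ : Filtration ℕ m} {τ : Ω → ℕ} (h : IsStoppingTime ℱ (fun ω => (τ ω : WithTop ℕ)))
    (n : ℕ) : IsStoppingTime ℱ (fun ω => (max (τ ω) n : WithTop ℕ)) := by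
  have := h.max_const n; simpa using this

lemma stopping_measurable {ℱ : Filtration ℕ m} {η : Ω → ℕ} (hη : IsStoppingTime ℱ (fun ω => (η ω : WithTop ℕ))) :
    Measurable η := by
  refine measurable_to_countable' fun n => ?_
  have : η ⁻¹' {n} = {ω | η ω = n} := rfl
  rw [this]
  exact (ℱ.le n) _ (nst_eq hη n)

lemma condexp_abs_bound {ℱ : Filtration ℕ m} {f : Ω → ℝ} {C : ℝ} (t : ℕ)
    (hf : Integrable f μ) (hb : ∀ ω, |f ω| ≤ C) :
    ∀ᵐ ω ∂μ, |(μ[f | ℱ t]) ω| ≤ C := by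
  have h1 : μ[f | ℱ t] ≤ᵐ[μ] μ[(fun _ => C) | ℱ t] :=
    condExp_mono hf (integrable_const _) (Eventually.of_forall fun ω => (abs_le.1 (hb ω)).2)
  have h2 : μ[(fun _ => -C : Ω → ℝ) | ℱ t] ≤ᵐ[μ] μ[f | ℱ t] :=
    condExp_mono (integrable_const _) hf (Eventually.of_forall fun ω => (abs_le.1 (hb ω)).1)
  rw [condExp_const (ℱ.le t)] at h1
  rw [condExp_const (ℱ.le t)] at h2
  filter_upwards [h1, h2] with ω hω1 hω2
  exact abs_le.2 ⟨hω2, hω1⟩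

lemma U_comp_integrable {ℱ : Filtration ℕ m} {T : ℕ} {U : ℕ → ℕ → Ω → ℝ} {C : ℝ}
    (hUmeas : ∀ s t, StronglyMeasurable[ℱ (max s t)] (U s t))
    (hC : ∀ s t ω, |U s t ω| ≤ C)
    {η ζ : Ω → ℕ} (hη : Measurable η) (hζ : Measurable ζ)
    (hηT : ∀ ω, η ω ≤ T) (hζT : ∀ ω, ζ ω ≤ T) :
    Measurable (fun ω => U (η ω) (ζ ω) ω) ∧ Integrable (fun ω => U (η ω) (ζ ω) ω) μ := by
  have hmeas : Measurable fun ω => U (η ω) (ζ ω) ω := by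
    refine meas_nat_comp (W := fun s ω => U s (ζ ω) ω) (T := T) (fun s _ => ?_) hη hηT
    refine meas_nat_comp (W := fun u ω => U s u ω) (T := T) (fun u _ => ?_) hζ hζT
    exact ((hUmeas s u).mono (ℱ.le _)).measurable
  exact ⟨hmeas, bdd_integrable (C := C) hmeas.aestronglyMeasurable
    (Eventually.of_forall fun ω => hC _ _ ω)⟩

lemma V1_version {ℱ : Filtration ℕ m} {T : ℕ} {U : ℕ → ℕ → Ω → ℝ} {C : ℝ}
    (hUmeas : ∀ s t, StronglyMeasurable[ℱ (max s t)] (U s t))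
    (hC : ∀ s t ω, |U s t ω| ≤ C)
    {t : ℕ} (ht : t ≤ T) (V1t : Ω → ℝ)
    (hle : ∀ ρ : Ω → ℕ, IsStoppingTime ℱ (fun ω => (ρ ω : WithTop ℕ)) → (∀ ω, t ≤ ρ ω ∧ ρ ω ≤ T) →
      V1t ≤ᵐ[μ] μ[fun ω => U (ρ ω) t ω | ℱ t])
    (hgr : ∀ Z : Ω → ℝ,
      (∀ ρ : Ω → ℕ, IsStoppingTime ℱ (fun ω => (ρ ω : WithTop ℕ)) → (∀ ω, t ≤ ρ ω ∧ ρ ω ≤ T) →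
        Z ≤ᵐ[μ] μ[fun ω => U (ρ ω) t ω | ℱ t]) → Z ≤ᵐ[μ] V1t) :
    ∃ W : Ω → ℝ, Measurable W ∧ Integrable W μ ∧ (∀ᵐ ω ∂μ, |W ω| ≤ C) ∧ V1t =ᵐ[μ] W := by
  classical
  set 𝒢 : Set (Ω → ℝ) := {g | ∃ ρ : Ω → ℕ, IsStoppingTime ℱ (fun ω => (ρ ω : WithTop ℕ)) ∧ (∀ ω, t ≤ ρ ω ∧ ρ ω ≤ T) ∧
    g = μ[fun ω => U (ρ ω) t ω | ℱ t]} with h𝒢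
  have hint : ∀ ρ : Ω → ℕ, IsStoppingTime ℱ (fun ω => (ρ ω : WithTop ℕ)) → (∀ ω, ρ ω ≤ T) →
      Integrable (fun ω => U (ρ ω) t ω) μ := fun ρ hρ hρT =>
    (U_comp_integrable hUmeas hC (stopping_measurable hρ) measurable_const hρT
      (fun _ => ht)).2
  have hne : 𝒢.Nonempty := by
    refine ⟨μ[fun ω => U ((fun _ => T) ω) t ω | ℱ t], fun _ => T, isStoppingTime_const ℱ T,
      fun ω => ⟨ht, le_rfl⟩, rfl⟩
  have hmeas𝒢 : ∀ g ∈ 𝒢, Measurable g := by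
    rintro g ⟨ρ, hρ, hb, rfl⟩
    exact (stronglyMeasurable_condExp.mono (ℱ.le t)).measurable
  have hbd𝒢 : ∀ g ∈ 𝒢, ∀ᵐ ω ∂μ, |g ω| ≤ C := by
    rintro g ⟨ρ, hρ, hb, rfl⟩
    exact condexp_abs_bound t (hint ρ hρ fun ω => (hb ω).2) (fun ω => hC _ _ ω)
  have hdir : ∀ g₁ ∈ 𝒢, ∀ g₂ ∈ 𝒢, ∃ g₃ ∈ 𝒢, g₃ ≤ᵐ[μ] g₁ ∧ g₃ ≤ᵐ[μ] g₂ := by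
    rintro g₁ ⟨ρ₁, hρ₁, hb₁, rfl⟩ g₂ ⟨ρ₂, hρ₂, hb₂, rfl⟩
    set f₁ : Ω → ℝ := fun ω => U (ρ₁ ω) t ω with hf₁
    set f₂ : Ω → ℝ := fun ω => U (ρ₂ ω) t ω with hf₂
    set A : Set Ω := {ω | (μ[f₁ | ℱ t]) ω ≤ (μ[f₂ | ℱ t]) ω} with hA
    have hAmeas : MeasurableSet[ℱ t] A :=
      stronglyMeasurable_condExp.measurableSet_le stronglyMeasurable_condExp
    set ρ₃ : Ω → ℕ := fun ω => if ω ∈ A then ρ₁ ω else ρ₂ ω with hρ₃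
    have hρ₃st : IsStoppingTime ℱ (fun ω => (ρ₃ ω : WithTop ℕ)) := by
      rw [nst_iff]; intro n
      rcases le_or_gt t n with h | h
      · have hset : {ω | ρ₃ ω ≤ n} =
            (A ∩ {ω | ρ₁ ω ≤ n}) ∪ (Aᶜ ∩ {ω | ρ₂ ω ≤ n}) := by
          ext ω; by_cases hω : ω ∈ A <;> simp [hρ₃, hω]
        rw [hset]
        refine MeasurableSet.union ?_ ?_
        · exact MeasurableSet.inter (ℱ.mono h _ hAmeas) (nst_le hρ₁ n)
        · exact MeasurableSet.inter (ℱ.mono h _ hAmeas.compl) (nst_le hρ₂ n)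
      · have hset : {ω | ρ₃ ω ≤ n} = (∅ : Set Ω) := by
          ext ω
          simp only [Set.mem_setOf_eq, Set.mem_empty_iff_false, iff_false, not_le, hρ₃]
          split
          · exact lt_of_lt_of_le h (hb₁ ω).1
          · exact lt_of_lt_of_le h (hb₂ ω).1
        rw [hset]; exact @MeasurableSet.empty Ω (ℱ n)
    have hρ₃b : ∀ ω, t ≤ ρ₃ ω ∧ ρ₃ ω ≤ T := by
      intro ω; rw [hρ₃]; dsimp only; split
      · exact hb₁ ω
      · exact hb₂ ω
    refine ⟨μ[fun ω => U (ρ₃ ω) t ω | ℱ t], ⟨ρ₃, hρ₃st, hρ₃b, rfl⟩, ?_⟩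
    have hf₃ : (fun ω => U (ρ₃ ω) t ω) =
        fun ω => A.indicator f₁ ω + Aᶜ.indicator f₂ ω := by
      funext ω
      by_cases hω : ω ∈ A <;> simp [hρ₃, hω, Set.indicator, hf₁, hf₂]
    have hf₁int : Integrable f₁ μ := hint ρ₁ hρ₁ fun ω => (hb₁ ω).2
    have hf₂int : Integrable f₂ μ := hint ρ₂ hρ₂ fun ω => (hb₂ ω).2
    have hce : μ[fun ω => U (ρ₃ ω) t ω | ℱ t] =ᵐ[μ]
        fun ω => A.indicator (μ[f₁ | ℱ t]) ω + Aᶜ.indicator (μ[f₂ | ℱ t]) ω := by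
      rw [hf₃]
      refine (condExp_add (hf₁int.indicator ((ℱ.le t) _ hAmeas))
        (hf₂int.indicator ((ℱ.le t) _ hAmeas.compl)) _).trans ?_
      filter_upwards [condExp_indicator hf₁int hAmeas,
        condExp_indicator hf₂int hAmeas.compl] with ω h1 h2
      simp only [Pi.add_apply]
      rw [h1, h2]
    constructor
    · filter_upwards [hce] with ω hω
      rw [hω]
      by_cases hmem : ω ∈ A
      · rw [Set.indicator_of_mem hmem, Set.indicator_of_notMem (by simpa using hmem),
          add_zero]
      · rw [Set.indicator_of_notMem hmem, Set.indicator_of_mem (by simpa using hmem),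
          zero_add]
        exact le_of_not_ge hmem
    · filter_upwards [hce] with ω hω
      rw [hω]
      by_cases hmem : ω ∈ A
      · rw [Set.indicator_of_mem hmem, Set.indicator_of_notMem (by simpa using hmem),
          add_zero]
        exact hmem
      · rw [Set.indicator_of_notMem hmem, Set.indicator_of_mem (by simpa using hmem),
          zero_add]
  obtain ⟨W, hWmeas, hWint, hWbd, hWle, hWgr⟩ := exists_essInf (μ := μ) 𝒢 C hne hmeas𝒢 hbd𝒢 hdir
  refine ⟨W, hWmeas, hWint, hWbd, ?_⟩
  have h1 : V1t ≤ᵐ[μ] W := by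
    refine hWgr V1t ?_
    rintro g ⟨ρ, hρ, hb, rfl⟩
    exact hle ρ hρ hb
  have h2 : W ≤ᵐ[μ] V1t := by
    refine hgr W ?_
    intro ρ hρ hb
    exact hWle _ ⟨ρ, hρ, hb, rfl⟩
  exact h1.antisymm h2

lemma S_version {ℱ : Filtration ℕ m} {T : ℕ} {U : ℕ → ℕ → Ω → ℝ} {C : ℝ}
    (hUmeas : ∀ s t, StronglyMeasurable[ℱ (max s t)] (U s t))
    (hC : ∀ s t ω, |U s t ω| ≤ C)
    {t : ℕ} (ht : t < T) (St : Ω → ℝ)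
    (hge : ∀ τ : Ω → ℕ, IsStoppingTime ℱ (fun ω => (τ ω : WithTop ℕ)) → (∀ ω, t + 1 ≤ τ ω ∧ τ ω ≤ T) →
      μ[fun ω => U t (τ ω) ω | ℱ t] ≤ᵐ[μ] St)
    (hleast : ∀ Z : Ω → ℝ,
      (∀ τ : Ω → ℕ, IsStoppingTime ℱ (fun ω => (τ ω : WithTop ℕ)) → (∀ ω, t + 1 ≤ τ ω ∧ τ ω ≤ T) →
        μ[fun ω => U t (τ ω) ω | ℱ t] ≤ᵐ[μ] Z) → St ≤ᵐ[μ] Z) :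
    ∃ W : Ω → ℝ, Measurable W ∧ Integrable W μ ∧ (∀ᵐ ω ∂μ, |W ω| ≤ C) ∧ St =ᵐ[μ] W := by
  classical
  set 𝒢 : Set (Ω → ℝ) := {g | ∃ τ : Ω → ℕ, IsStoppingTime ℱ (fun ω => (τ ω : WithTop ℕ)) ∧ (∀ ω, t + 1 ≤ τ ω ∧ τ ω ≤ T) ∧
    g = μ[fun ω => U t (τ ω) ω | ℱ t]} with h𝒢
  have hint : ∀ τ : Ω → ℕ, IsStoppingTime ℱ (fun ω => (τ ω : WithTop ℕ)) → (∀ ω, τ ω ≤ T) →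
      Integrable (fun ω => U t (τ ω) ω) μ := fun τ hτ hτT =>
    (U_comp_integrable hUmeas hC measurable_const (stopping_measurable hτ)
      (fun _ => ht.le) hτT).2
  have hne : 𝒢.Nonempty :=
    ⟨μ[fun ω => U t ((fun _ => T) ω) ω | ℱ t], fun _ => T, isStoppingTime_const ℱ T,
      fun ω => ⟨ht, le_rfl⟩, rfl⟩
  have hmeas𝒢 : ∀ g ∈ 𝒢, Measurable g := by
    rintro g ⟨τ, hτ, hb, rfl⟩
    exact (stronglyMeasurable_condExp.mono (ℱ.le t)).measurable
  have hbd𝒢 : ∀ g ∈ 𝒢, ∀ᵐ ω ∂μ, |g ω| ≤ C := by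
    rintro g ⟨τ, hτ, hb, rfl⟩
    exact condexp_abs_bound t (hint τ hτ fun ω => (hb ω).2) (fun ω => hC _ _ ω)
  have hdir : ∀ g₁ ∈ 𝒢, ∀ g₂ ∈ 𝒢, ∃ g₃ ∈ 𝒢, g₁ ≤ᵐ[μ] g₃ ∧ g₂ ≤ᵐ[μ] g₃ := by
    rintro g₁ ⟨τ₁, hτ₁, hb₁, rfl⟩ g₂ ⟨τ₂, hτ₂, hb₂, rfl⟩
    set f₁ : Ω → ℝ := fun ω => U t (τ₁ ω) ω with hf₁
    set f₂ : Ω → ℝ := fun ω => U t (τ₂ ω) ω with hf₂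
    set A : Set Ω := {ω | (μ[f₂ | ℱ t]) ω ≤ (μ[f₁ | ℱ t]) ω} with hA
    have hAmeas : MeasurableSet[ℱ t] A :=
      stronglyMeasurable_condExp.measurableSet_le stronglyMeasurable_condExp
    set τ₃ : Ω → ℕ := fun ω => if ω ∈ A then τ₁ ω else τ₂ ω with hτ₃
    have hτ₃st : IsStoppingTime ℱ (fun ω => (τ₃ ω : WithTop ℕ)) := by
      rw [nst_iff]; intro n
      rcases le_or_gt t n with h | h
      · have hset : {ω | τ₃ ω ≤ n} =
            (A ∩ {ω | τ₁ ω ≤ n}) ∪ (Aᶜ ∩ {ω | τ₂ ω ≤ n}) := by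
          ext ω; by_cases hω : ω ∈ A <;> simp [hτ₃, hω]
        rw [hset]
        refine MeasurableSet.union ?_ ?_
        · exact MeasurableSet.inter (ℱ.mono h _ hAmeas) (nst_le hτ₁ n)
        · exact MeasurableSet.inter (ℱ.mono h _ hAmeas.compl) (nst_le hτ₂ n)
      · have hset : {ω | τ₃ ω ≤ n} = (∅ : Set Ω) := by
          ext ω
          simp only [Set.mem_setOf_eq, Set.mem_empty_iff_false, iff_false, not_le, hτ₃]
          split
          · exact lt_of_lt_of_le h (le_trans (Nat.le_succ t) (hb₁ ω).1)
          · exact lt_of_lt_of_le h (le_trans (Nat.le_succ t) (hb₂ ω).1)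
        rw [hset]; exact @MeasurableSet.empty Ω (ℱ n)
    have hτ₃b : ∀ ω, t + 1 ≤ τ₃ ω ∧ τ₃ ω ≤ T := by
      intro ω; rw [hτ₃]; dsimp only; split
      · exact hb₁ ω
      · exact hb₂ ω
    refine ⟨μ[fun ω => U t (τ₃ ω) ω | ℱ t], ⟨τ₃, hτ₃st, hτ₃b, rfl⟩, ?_⟩
    have hf₃ : (fun ω => U t (τ₃ ω) ω) =
        fun ω => A.indicator f₁ ω + Aᶜ.indicator f₂ ω := by
      funext ω
      by_cases hω : ω ∈ A <;> simp [hτ₃, hω, Set.indicator, hf₁, hf₂]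
    have hf₁int : Integrable f₁ μ := hint τ₁ hτ₁ fun ω => (hb₁ ω).2
    have hf₂int : Integrable f₂ μ := hint τ₂ hτ₂ fun ω => (hb₂ ω).2
    have hce : μ[fun ω => U t (τ₃ ω) ω | ℱ t] =ᵐ[μ]
        fun ω => A.indicator (μ[f₁ | ℱ t]) ω + Aᶜ.indicator (μ[f₂ | ℱ t]) ω := by
      rw [hf₃]
      refine (condExp_add (hf₁int.indicator ((ℱ.le t) _ hAmeas))
        (hf₂int.indicator ((ℱ.le t) _ hAmeas.compl)) _).trans ?_
      filter_upwards [condExp_indicator hf₁int hAmeas,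
        condExp_indicator hf₂int hAmeas.compl] with ω h1 h2
      simp only [Pi.add_apply]
      rw [h1, h2]
    constructor
    · filter_upwards [hce] with ω hω
      rw [hω]
      by_cases hmem : ω ∈ A
      · rw [Set.indicator_of_mem hmem, Set.indicator_of_notMem (by simpa using hmem),
          add_zero]
      · rw [Set.indicator_of_notMem hmem, Set.indicator_of_mem (by simpa using hmem),
          zero_add]
        exact le_of_not_ge hmem
    · filter_upwards [hce] with ω hω
      rw [hω]
      by_cases hmem : ω ∈ A
      · rw [Set.indicator_of_mem hmem, Set.indicator_of_notMem (by simpa using hmem),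
          add_zero]
        exact hmem
      · rw [Set.indicator_of_notMem hmem, Set.indicator_of_mem (by simpa using hmem),
          zero_add]
  obtain ⟨W, hWmeas, hWint, hWbd, hWle, hWgr⟩ := exists_essSup (μ := μ) 𝒢 C hne hmeas𝒢 hbd𝒢 hdir
  refine ⟨W, hWmeas, hWint, hWbd, ?_⟩
  have h1 : St ≤ᵐ[μ] W := by
    refine hleast W ?_
    intro τ hτ hb
    exact hWle _ ⟨τ, hτ, hb, rfl⟩
  have h2 : W ≤ᵐ[μ] St := by
    refine hWgr St ?_
    rintro g ⟨τ, hτ, hb, rfl⟩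
    exact hge τ hτ hb
  exact h1.antisymm h2
end Helpers


/-- For every Type II strategy `ρ`, with
`τ*(ρ) := τ_d 1_{τ_d≤ρ(τ_d)} + τ_u(ρ(τ_d)) 1_{τ_d>ρ(τ_d)}`:
`sup_{τ∈𝒯} E[U(ρ(τ),τ)] ≥ E[U(ρ(τ*(ρ)),τ*(ρ))] ≥ V`; consequently
`inf_{ρ∈𝕋ⁱⁱ} sup_{τ∈𝒯} E[U(ρ(τ),τ)] ≥ V`. -/
theorem stmt_16 {Ω : Type*} {m : MeasurableSpace Ω} {μ : Measure Ω} [IsProbabilityMeasure μ]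
    (ℱ : Filtration ℕ m) (T : ℕ)
    (U : ℕ → ℕ → Ω → ℝ)
    (hUmeas : ∀ s t, StronglyMeasurable[ℱ (max s t)] (U s t))
    (hUbdd : ∃ C, ∀ s t ω, |U s t ω| ≤ C)
    (𝒯 : Set (Ω → ℕ))
    (h𝒯 : 𝒯 = {σ | IsStoppingTime ℱ (fun ω => (σ ω : WithTop ℕ)) ∧ ∀ ω, σ ω ≤ T})
    (V1 S V2 : ℕ → Ω → ℝ)
    (hV1le : ∀ t ≤ T, ∀ ρ : Ω → ℕ, IsStoppingTime ℱ (fun ω => (ρ ω : WithTop ℕ)) → (∀ ω, t ≤ ρ ω ∧ ρ ω ≤ T) →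
      V1 t ≤ᵐ[μ] μ[fun ω => U (ρ ω) t ω | ℱ t])
    (hV1greatest : ∀ t ≤ T, ∀ Z : Ω → ℝ,
      (∀ ρ : Ω → ℕ, IsStoppingTime ℱ (fun ω => (ρ ω : WithTop ℕ)) → (∀ ω, t ≤ ρ ω ∧ ρ ω ≤ T) →
        Z ≤ᵐ[μ] μ[fun ω => U (ρ ω) t ω | ℱ t]) → Z ≤ᵐ[μ] V1 t)
    (hSge : ∀ t < T, ∀ τ : Ω → ℕ, IsStoppingTime ℱ (fun ω => (τ ω : WithTop ℕ)) → (∀ ω, t + 1 ≤ τ ω ∧ τ ω ≤ T) →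
      μ[fun ω => U t (τ ω) ω | ℱ t] ≤ᵐ[μ] S t)
    (hSleast : ∀ t < T, ∀ Z : Ω → ℝ,
      (∀ τ : Ω → ℕ, IsStoppingTime ℱ (fun ω => (τ ω : WithTop ℕ)) → (∀ ω, t + 1 ≤ τ ω ∧ τ ω ≤ T) →
        μ[fun ω => U t (τ ω) ω | ℱ t] ≤ᵐ[μ] Z) → S t ≤ᵐ[μ] Z)
    (hV2 : ∀ t < T, ∀ ω, V2 t ω = max (S t ω) (V1 t ω))
    (hV2T : V2 T = U T T)
    (TypeII : ((Ω → ℕ) → Ω → ℕ) → Prop)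
    (hTypeII : ∀ ρ, TypeII ρ ↔ ((∀ σ ∈ 𝒯, ρ σ ∈ 𝒯) ∧ ∀ σ₁ ∈ 𝒯, ∀ σ₂ ∈ 𝒯, ∀ ω,
      (ρ σ₁ ω = ρ σ₂ ω ∧ ρ σ₁ ω < min (σ₁ ω) (σ₂ ω)) ∨
        min (σ₁ ω) (σ₂ ω) ≤ min (ρ σ₁ ω) (ρ σ₂ ω)))
    -- the Dynkin game value V and its optimal τ_d
    (V : ℝ)
    (hV : V = ⨅ ρ : 𝒯, ⨆ τ : 𝒯,
      ∫ ω, (if τ.1 ω ≤ ρ.1 ω then V1 (τ.1 ω) ω else V2 (ρ.1 ω) ω) ∂μ)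
    (τd : Ω → ℕ) (hτd : τd ∈ 𝒯)
    (hτdopt : V = ⨅ ρ : 𝒯,
      ∫ ω, (if τd ω ≤ ρ.1 ω then V1 (τd ω) ω else V2 (ρ.1 ω) ω) ∂μ)
    -- strictly before τ_d one has V¹ < V², so the esssup part attains V²
    (hbefore : ∀ᵐ ω ∂μ, ∀ s, s < τd ω → V1 s ω < V2 s ω)
    -- optimizers τ_u(t) of the esssup, with τ_u(t) ≥ t+1 for t < T and τ_u(T) = T
    (τu : ℕ → Ω → ℕ)
    (hτu : ∀ t ≤ T, IsStoppingTime ℱ (fun ω => (τu t ω : WithTop ℕ)) ∧ ∀ ω, τu t ω ≤ T)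
    (hτuge : ∀ t, t < T → ∀ ω, t + 1 ≤ τu t ω)
    (hτuT : ∀ ω, τu T ω = T)
    (hτuopt : ∀ t < T, S t =ᵐ[μ] μ[fun ω => U t (τu t ω) ω | ℱ t]) :
    (∀ ρ : (Ω → ℕ) → Ω → ℕ, TypeII ρ →
      ∀ τs : Ω → ℕ, (∀ ω, τs ω = if τd ω ≤ ρ τd ω then τd ω else τu (ρ τd ω) ω) →
        V ≤ ∫ ω, U (ρ τs ω) (τs ω) ω ∂μ ∧
        (∫ ω, U (ρ τs ω) (τs ω) ω ∂μ) ≤ ⨆ τ : 𝒯, ∫ ω, U (ρ τ.1 ω) (τ.1 ω) ω ∂μ) ∧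
    V ≤ ⨅ ρ : {ρ : (Ω → ℕ) → Ω → ℕ // TypeII ρ}, ⨆ τ : 𝒯,
      ∫ ω, U (ρ.1 τ.1 ω) (τ.1 ω) ω ∂μ := by
  classical
  obtain ⟨C, hC⟩ := hUbdd
  have hΩ : Nonempty Ω := by
    by_contra h
    rw [not_nonempty_iff] at h
    have h1 : μ Set.univ = 1 := measure_univ
    rw [Set.univ_eq_empty_iff.2 h] at h1
    simp at h1
  have hC0 : 0 ≤ C := le_trans (abs_nonneg _) (hC 0 0 hΩ.some)
  -- measurable versions of V1, S, V2
  have hW1ex : ∀ t, ∃ W : Ω → ℝ, t ≤ T → (Measurable W ∧ Integrable W μ ∧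
      (∀ᵐ ω ∂μ, |W ω| ≤ C) ∧ V1 t =ᵐ[μ] W) := by
    intro t
    by_cases h : t ≤ T
    · obtain ⟨W, hW⟩ := V1_version (μ := μ) hUmeas hC h (V1 t) (hV1le t h) (hV1greatest t h)
      exact ⟨W, fun _ => hW⟩
    · exact ⟨0, fun h' => absurd h' h⟩
  choose W1 hW1 using hW1ex
  have hWSex : ∀ t, ∃ W : Ω → ℝ, t < T → (Measurable W ∧ Integrable W μ ∧
      (∀ᵐ ω ∂μ, |W ω| ≤ C) ∧ S t =ᵐ[μ] W) := by
    intro t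
    by_cases h : t < T
    · obtain ⟨W, hW⟩ := S_version (μ := μ) hUmeas hC h (S t) (hSge t h) (hSleast t h)
      exact ⟨W, fun _ => hW⟩
    · exact ⟨0, fun h' => absurd h' h⟩
  choose WS hWS using hWSex
  set W2 : ℕ → Ω → ℝ := fun t => if t < T then (fun ω => max (WS t ω) (W1 t ω)) else U T T
    with hW2def
  have hW2 : ∀ t, t ≤ T → (Measurable (W2 t) ∧ Integrable (W2 t) μ ∧
      (∀ᵐ ω ∂μ, |W2 t ω| ≤ C) ∧ V2 t =ᵐ[μ] W2 t) := by
    intro t ht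
    rcases lt_or_eq_of_le ht with h | h
    · obtain ⟨hm1, hi1, hb1, he1⟩ := hW1 t ht
      obtain ⟨hmS, hiS, hbS, heS⟩ := hWS t h
      have hW2t : W2 t = fun ω => max (WS t ω) (W1 t ω) := by
        rw [hW2def]; simp [h]
      rw [hW2t]
      have hm : Measurable fun ω => max (WS t ω) (W1 t ω) := hmS.max hm1
      have hbd : ∀ᵐ ω ∂μ, |max (WS t ω) (W1 t ω)| ≤ C := by
        filter_upwards [hb1, hbS] with ω h1 h2
        rcases max_choice (WS t ω) (W1 t ω) with hh | hh <;> rw [hh] <;> assumption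
      refine ⟨hm, bdd_integrable (C := C) hm.aestronglyMeasurable hbd, hbd, ?_⟩
      filter_upwards [he1, heS] with ω h1 h2
      rw [hV2 t h ω, h1, h2]
    · subst h
      have hW2t : W2 t = U t t := by
        rw [hW2def]; simp
      rw [hW2t, hV2T]
      have hm : Measurable (U t t) := ((hUmeas t t).mono (ℱ.le _)).measurable
      exact ⟨hm, bdd_integrable (C := C) hm.aestronglyMeasurable
        (Eventually.of_forall fun ω => hC _ _ ω),
        Eventually.of_forall fun ω => hC _ _ ω, EventuallyEq.rfl⟩
  have hVW : ∀ᵐ ω ∂μ, ∀ t, t ≤ T →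
      (V1 t ω = W1 t ω ∧ V2 t ω = W2 t ω ∧ |W1 t ω| ≤ C ∧ |W2 t ω| ≤ C) := by
    rw [ae_all_iff]
    intro t
    by_cases h : t ≤ T
    · obtain ⟨_, _, hb1, he1⟩ := hW1 t h
      obtain ⟨_, _, hb2, he2⟩ := hW2 t h
      filter_upwards [hb1, hb2, he1, he2] with ω h1 h2 h3 h4 _
      exact ⟨h3, h4, h1, h2⟩
    · filter_upwards with ω h'
      exact absurd h' h
  -- stopping time basics
  have hτdmem := hτd
  rw [h𝒯] at hτdmem
  obtain ⟨hτdst, hτdT⟩ := hτdmem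
  have hτdmeas : Measurable τd := stopping_measurable hτdst
  -- the key statement, for a fixed Type II strategy
  have key : ∀ ρ : (Ω → ℕ) → Ω → ℕ, TypeII ρ →
      ∀ τs : Ω → ℕ, (∀ ω, τs ω = if τd ω ≤ ρ τd ω then τd ω else τu (ρ τd ω) ω) →
        τs ∈ 𝒯 ∧ V ≤ ∫ ω, U (ρ τs ω) (τs ω) ω ∂μ := by
    intro ρ hρ τs hτs
    obtain ⟨hmap, hdich⟩ := (hTypeII ρ).1 hρ
    have hρτdmem := hmap τd hτd
    have hρτdmem' := hρτdmem
    rw [h𝒯] at hρτdmem'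
    obtain ⟨hρτdst, hρτdT⟩ := hρτdmem'
    have hρτdmeas : Measurable (ρ τd) := stopping_measurable hρτdst
    -- τs is a bounded stopping time
    have hτsT : ∀ ω, τs ω ≤ T := by
      intro ω
      rw [hτs ω]
      split
      · exact hτdT ω
      · exact (hτu (ρ τd ω) (hρτdT ω)).2 ω
    have hτsst : IsStoppingTime ℱ (fun ω => (τs ω : WithTop ℕ)) := by
      rw [nst_iff]; intro n
      have hset : {ω | τs ω ≤ n} =
          (⋃ k ∈ Finset.range (n + 1), ({ω | τd ω = k} ∩ {ω | ρ τd ω < k}ᶜ)) ∪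
          (⋃ k ∈ Finset.range (n + 1),
            ({ω | ρ τd ω = k} ∩ {ω | τd ω ≤ k}ᶜ ∩ {ω | τu k ω ≤ n})) := by
        ext ω
        simp only [Set.mem_union, Set.mem_iUnion, Finset.mem_range, Set.mem_inter_iff,
          Set.mem_setOf_eq, Set.mem_compl_iff, exists_prop, not_lt, not_le]
        constructor
        · intro hle
          rw [hτs ω] at hle
          by_cases hcase : τd ω ≤ ρ τd ω
          · rw [if_pos hcase] at hle
            exact Or.inl ⟨τd ω, Nat.lt_succ_of_le hle, rfl, hcase⟩
          · rw [if_neg hcase] at hle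
            push_neg at hcase
            have h1 : ρ τd ω < T := lt_of_lt_of_le hcase (hτdT ω)
            have h2 := hτuge (ρ τd ω) h1 ω
            exact Or.inr ⟨ρ τd ω, by omega, ⟨rfl, hcase⟩, hle⟩
        · rintro (⟨k, hk, hkeq, hkle⟩ | ⟨k, hk, ⟨hkeq, hklt⟩, hkle⟩)
          · rw [hτs ω, if_pos (hkeq ▸ hkle)]
            omega
          · rw [hτs ω, if_neg (by omega), hkeq]
            exact hkle
      rw [hset]
      refine MeasurableSet.union ?_ ?_
      · refine Finset.measurableSet_biUnion _ fun k hk => ?_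
        have hkn : k ≤ n := Nat.lt_succ_iff.1 (Finset.mem_range.1 hk)
        refine MeasurableSet.inter ?_ ?_
        · exact ℱ.mono hkn _ (nst_eq hτdst k)
        · exact ℱ.mono hkn _ (nst_lt hρτdst k).compl
      · refine Finset.measurableSet_biUnion _ fun k hk => ?_
        have hkn : k ≤ n := Nat.lt_succ_iff.1 (Finset.mem_range.1 hk)
        by_cases hkT : k ≤ T
        · refine MeasurableSet.inter (MeasurableSet.inter ?_ ?_) ?_
          · exact ℱ.mono hkn _ (nst_eq hρτdst k)
          · exact ℱ.mono hkn _ (nst_le hτdst k).compl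
          · exact nst_le (hτu k hkT).1 n
        · have hempty : ({ω | ρ τd ω = k} ∩ {ω | τd ω ≤ k}ᶜ ∩ {ω | τu k ω ≤ n}) =
              (∅ : Set Ω) := by
            ext ω
            simp only [Set.mem_inter_iff, Set.mem_setOf_eq, Set.mem_compl_iff,
              Set.mem_empty_iff_false, iff_false, not_and]
            intro h1
            exfalso
            exact hkT (h1.1 ▸ hρτdT ω)
          rw [hempty]
          exact @MeasurableSet.empty Ω (ℱ n)
    have hτsmem : τs ∈ 𝒯 := by rw [h𝒯]; exact ⟨hτsst, hτsT⟩
    have hρτsmem := hmap τs hτsmem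
    have hρτsmem' := hρτsmem
    rw [h𝒯] at hρτsmem'
    obtain ⟨hρτsst, hρτsT⟩ := hρτsmem'
    have hρτsmeas : Measurable (ρ τs) := stopping_measurable hρτsst
    have hτsmeas : Measurable τs := stopping_measurable hτsst
    -- the two pointwise dichotomy consequences
    have hdi := hdich τd hτd τs hτsmem
    have P1 : ∀ ω, τd ω ≤ ρ τd ω → τd ω ≤ ρ τs ω := by
      intro ω h
      have hts : τs ω = τd ω := by rw [hτs ω, if_pos h]
      rcases hdi ω with ⟨heq, hlt⟩ | hge
      · rw [hts, min_self] at hlt; omega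
      · rw [hts, min_self] at hge
        exact le_trans hge (min_le_right _ _)
    have P2 : ∀ ω, ρ τd ω < τd ω → ρ τs ω = ρ τd ω ∧ τs ω = τu (ρ τd ω) ω := by
      intro ω h
      have hts : τs ω = τu (ρ τd ω) ω := by rw [hτs ω, if_neg (not_le.2 h)]
      refine ⟨?_, hts⟩
      have hlt2 : ρ τd ω < τs ω := by
        rw [hts]
        have h1 : ρ τd ω < T := lt_of_lt_of_le h (hτdT ω)
        exact lt_of_lt_of_le (Nat.lt_succ_self _) (hτuge _ h1 ω)
      rcases hdi ω with ⟨heq, _⟩ | hge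
      · exact heq.symm
      · exfalso
        have h3 : ρ τd ω < min (τd ω) (τs ω) := lt_min h hlt2
        have h4 : min (ρ τd ω) (ρ τs ω) ≤ ρ τd ω := min_le_left _ _
        omega
    -- the payoff function
    set f : Ω → ℝ := fun ω => U (ρ τs ω) (τs ω) ω with hfdef
    have hfint : Integrable f μ :=
      (U_comp_integrable (μ := μ) hUmeas hC hρτsmeas hτsmeas hρτsT hτsT).2
    -- generic integrable version of the Dynkin integrand
    have hG'gen : ∀ ρ' : Ω → ℕ, IsStoppingTime ℱ (fun ω => (ρ' ω : WithTop ℕ)) → (∀ ω, ρ' ω ≤ T) →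
        Measurable (fun ω => if τd ω ≤ ρ' ω then W1 (τd ω) ω else W2 (ρ' ω) ω) ∧
        Integrable (fun ω => if τd ω ≤ ρ' ω then W1 (τd ω) ω else W2 (ρ' ω) ω) μ ∧
        (∀ᵐ ω ∂μ, |(if τd ω ≤ ρ' ω then W1 (τd ω) ω else W2 (ρ' ω) ω)| ≤ C) ∧
        (fun ω => if τd ω ≤ ρ' ω then V1 (τd ω) ω else V2 (ρ' ω) ω) =ᵐ[μ]
          (fun ω => if τd ω ≤ ρ' ω then W1 (τd ω) ω else W2 (ρ' ω) ω) := by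
      intro ρ' hρ'st hρ'T
      have hρ'meas : Measurable ρ' := stopping_measurable hρ'st
      have hmeasG : Measurable (fun ω => if τd ω ≤ ρ' ω then W1 (τd ω) ω else W2 (ρ' ω) ω) := by
        refine Measurable.ite (measurableSet_le hτdmeas hρ'meas) ?_ ?_
        · exact meas_nat_comp (fun t ht => (hW1 t ht).1) hτdmeas hτdT
        · exact meas_nat_comp (fun t ht => (hW2 t ht).1) hρ'meas hρ'T
      have hbdG : ∀ᵐ ω ∂μ, |(if τd ω ≤ ρ' ω then W1 (τd ω) ω else W2 (ρ' ω) ω)| ≤ C := by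
        filter_upwards [hVW] with ω hω
        by_cases h : τd ω ≤ ρ' ω
        · rw [if_pos h]; exact (hω (τd ω) (hτdT ω)).2.2.1
        · rw [if_neg h]; exact (hω (ρ' ω) (hρ'T ω)).2.2.2
      refine ⟨hmeasG, bdd_integrable (C := C) hmeasG.aestronglyMeasurable hbdG, hbdG, ?_⟩
      filter_upwards [hVW] with ω hω
      by_cases h : τd ω ≤ ρ' ω
      · rw [if_pos h, if_pos h]; exact (hω (τd ω) (hτdT ω)).1
      · rw [if_neg h, if_neg h]; exact (hω (ρ' ω) (hρ'T ω)).2.1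
    -- V is at most the Dynkin payoff of (τd, ρ τd)
    obtain ⟨hGmeas, hGint, hGbd, hGae⟩ := hG'gen (ρ τd) hρτdst hρτdT
    set G : Ω → ℝ := fun ω => if τd ω ≤ ρ τd ω then W1 (τd ω) ω else W2 (ρ τd ω) ω with hGdef
    have hVleG : V ≤ ∫ ω, G ω ∂μ := by
      have h1 : V ≤ ∫ ω, (if τd ω ≤ ρ τd ω then V1 (τd ω) ω else V2 (ρ τd ω) ω) ∂μ := by
        rw [hτdopt]
        refine ciInf_le ⟨-C, ?_⟩ (⟨ρ τd, hρτdmem⟩ : 𝒯)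
        rintro x ⟨⟨ρ', hρ'mem⟩, rfl⟩
        show -C ≤ ∫ ω, (if τd ω ≤ ρ' ω then V1 (τd ω) ω else V2 (ρ' ω) ω) ∂μ
        have hρ'mem' := hρ'mem
        rw [h𝒯] at hρ'mem'
        obtain ⟨hρ'st, hρ'T⟩ := hρ'mem'
        obtain ⟨_, hint', hbd', hae'⟩ := hG'gen ρ' hρ'st hρ'T
        rw [integral_congr_ae hae']
        calc -C = ∫ _ : Ω, (-C : ℝ) ∂μ := by simp
        _ ≤ _ := integral_mono_ae (integrable_const _) hint'
          (by filter_upwards [hbd'] with ω h using (abs_le.1 h).1)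
      rw [integral_congr_ae hGae] at h1
      exact h1
    -- the partition sets
    set Bset : ℕ → Set Ω := fun t => {ω | τd ω = t ∧ t ≤ ρ τd ω} with hBdef
    set Dset : ℕ → Set Ω := fun t => {ω | ρ τd ω = t ∧ t < τd ω} with hDdef
    have hBm : ∀ t, MeasurableSet[ℱ t] (Bset t) := by
      intro t
      have heq : Bset t = {ω | τd ω = t} ∩ {ω | ρ τd ω < t}ᶜ := by
        ext ω
        simp [hBdef, not_lt]
      rw [heq]
      exact MeasurableSet.inter (nst_eq hτdst t) (nst_lt hρτdst t).compl
    have hDm : ∀ t, MeasurableSet[ℱ t] (Dset t) := by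
      intro t
      have heq : Dset t = {ω | ρ τd ω = t} ∩ {ω | τd ω ≤ t}ᶜ := by
        ext ω
        simp [hDdef, not_le]
      rw [heq]
      exact MeasurableSet.inter (nst_eq hρτdst t) (nst_le hτdst t).compl
    have hBm' : ∀ t, MeasurableSet (Bset t) := fun t => (ℱ.le t) _ (hBm t)
    have hDm' : ∀ t, MeasurableSet (Dset t) := fun t => (ℱ.le t) _ (hDm t)
    -- integral decomposition along the partition
    have hdecomp : ∀ φ : Ω → ℝ, Integrable φ μ →
        ∫ ω, φ ω ∂μ = ∑ t ∈ Finset.range (T + 1),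
          ((∫ ω in Bset t, φ ω ∂μ) + ∫ ω in Dset t, φ ω ∂μ) := by
      intro φ hφ
      have hpt : ∀ ω, φ ω = ∑ t ∈ Finset.range (T + 1),
          ((Bset t).indicator φ ω + (Dset t).indicator φ ω) := by
        intro ω
        by_cases hcase : τd ω ≤ ρ τd ω
        · rw [Finset.sum_eq_single (τd ω)]
          · rw [Set.indicator_of_mem (show ω ∈ Bset (τd ω) from ⟨rfl, hcase⟩),
              Set.indicator_of_notMem (show ω ∉ Dset (τd ω) from fun hmem => by
                obtain ⟨h1, h2⟩ := hmem; omega), add_zero]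
          · intro b _ hb
            rw [Set.indicator_of_notMem (show ω ∉ Bset b from fun hmem => hb hmem.1.symm),
              Set.indicator_of_notMem (show ω ∉ Dset b from fun hmem => by
                obtain ⟨h1, h2⟩ := hmem; omega), add_zero]
          · intro h
            exact absurd (Finset.mem_range.2 (Nat.lt_succ_of_le (hτdT ω))) h
        · push_neg at hcase
          rw [Finset.sum_eq_single (ρ τd ω)]
          · rw [Set.indicator_of_notMem (show ω ∉ Bset (ρ τd ω) from fun hmem => by
                obtain ⟨h1, h2⟩ := hmem; omega),
              Set.indicator_of_mem (show ω ∈ Dset (ρ τd ω) from ⟨rfl, hcase⟩), zero_add]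
          · intro b _ hb
            rw [Set.indicator_of_notMem (show ω ∉ Bset b from fun hmem => by
                obtain ⟨h1, h2⟩ := hmem; omega),
              Set.indicator_of_notMem (show ω ∉ Dset b from fun hmem => hb hmem.1.symm),
              add_zero]
          · intro h
            exact absurd (Finset.mem_range.2 (Nat.lt_succ_of_le (hρτdT ω))) h
      calc ∫ ω, φ ω ∂μ
          = ∫ ω, (∑ t ∈ Finset.range (T + 1),
            ((Bset t).indicator φ ω + (Dset t).indicator φ ω)) ∂μ :=
        integral_congr_ae (Eventually.of_forall hpt)
      _ = ∑ t ∈ Finset.range (T + 1),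
            ∫ ω, ((Bset t).indicator φ ω + (Dset t).indicator φ ω) ∂μ :=
        integral_finset_sum _ fun t _ =>
          (hφ.indicator (hBm' t)).add (hφ.indicator (hDm' t))
      _ = ∑ t ∈ Finset.range (T + 1),
            ((∫ ω in Bset t, φ ω ∂μ) + ∫ ω in Dset t, φ ω ∂μ) := by
        refine Finset.sum_congr rfl fun t _ => ?_
        rw [integral_add (hφ.indicator (hBm' t)) (hφ.indicator (hDm' t)),
          integral_indicator (hBm' t), integral_indicator (hDm' t)]
    -- the main comparison
    have hmain : ∫ ω, G ω ∂μ ≤ ∫ ω, f ω ∂μ := by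
      rw [hdecomp G hGint, hdecomp f hfint]
      refine Finset.sum_le_sum fun t htmem => ?_
      have htT : t ≤ T := Nat.lt_succ_iff.1 (Finset.mem_range.1 htmem)
      obtain ⟨hm1, hi1, hb1, he1⟩ := hW1 t htT
      -- the B part
      have hB : ∫ ω in Bset t, G ω ∂μ ≤ ∫ ω in Bset t, f ω ∂μ := by
        set σt : Ω → ℕ := fun ω => max (ρ τs ω) t with hσtdef
        have hσtst : IsStoppingTime ℱ (fun ω => (σt ω : WithTop ℕ)) := nst_max_const hρτsst t
        have hσtb : ∀ ω, t ≤ σt ω ∧ σt ω ≤ T :=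
          fun ω => ⟨le_max_right _ _, max_le (hρτsT ω) htT⟩
        have hUσint : Integrable (fun ω => U (σt ω) t ω) μ :=
          (U_comp_integrable (μ := μ) hUmeas hC (stopping_measurable hσtst)
            measurable_const (fun ω => (hσtb ω).2) (fun _ => htT)).2
        have hEle : V1 t ≤ᵐ[μ] μ[fun ω => U (σt ω) t ω | ℱ t] :=
          hV1le t htT σt hσtst hσtb
        have step1 : ∫ ω in Bset t, G ω ∂μ = ∫ ω in Bset t, W1 t ω ∂μ := by
          refine setIntegral_congr_fun (hBm' t) fun ω hω => ?_
          obtain ⟨h1, h2⟩ := hω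
          have h3 : τd ω ≤ ρ τd ω := by omega
          show (if τd ω ≤ ρ τd ω then W1 (τd ω) ω else W2 (ρ τd ω) ω) = W1 t ω
          rw [if_pos h3, h1]
        have step2 : ∫ ω in Bset t, W1 t ω ∂μ ≤
            ∫ ω in Bset t, (μ[fun ω => U (σt ω) t ω | ℱ t]) ω ∂μ := by
          refine setIntegral_mono_ae hi1.integrableOn integrable_condExp.integrableOn ?_
          filter_upwards [he1, hEle] with ω h1 h2
          rw [← h1]; exact h2
        have step3 : ∫ ω in Bset t, (μ[fun ω => U (σt ω) t ω | ℱ t]) ω ∂μ =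
            ∫ ω in Bset t, U (σt ω) t ω ∂μ :=
          setIntegral_condExp (ℱ.le t) hUσint (hBm t)
        have step4 : ∫ ω in Bset t, U (σt ω) t ω ∂μ = ∫ ω in Bset t, f ω ∂μ := by
          refine setIntegral_congr_fun (hBm' t) fun ω hω => ?_
          obtain ⟨h1, h2⟩ := hω
          have h3 : τd ω ≤ ρ τd ω := by omega
          have h4 : t ≤ ρ τs ω := h1 ▸ P1 ω h3
          have h5 : τs ω = t := by rw [hτs ω, if_pos h3, h1]
          show U (σt ω) t ω = U (ρ τs ω) (τs ω) ω
          rw [show σt ω = ρ τs ω from max_eq_left h4, h5]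
        calc ∫ ω in Bset t, G ω ∂μ = ∫ ω in Bset t, W1 t ω ∂μ := step1
        _ ≤ ∫ ω in Bset t, (μ[fun ω => U (σt ω) t ω | ℱ t]) ω ∂μ := step2
        _ = ∫ ω in Bset t, U (σt ω) t ω ∂μ := step3
        _ = ∫ ω in Bset t, f ω ∂μ := step4
      -- the D part
      have hD : ∫ ω in Dset t, G ω ∂μ = ∫ ω in Dset t, f ω ∂μ := by
        by_cases htlt : t < T
        · obtain ⟨hmS, hiS, hbS, heS⟩ := hWS t htlt
          have hUτuint : Integrable (fun ω => U t (τu t ω) ω) μ :=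
            (U_comp_integrable (μ := μ) hUmeas hC measurable_const
              (stopping_measurable (hτu t htT).1) (fun _ => htT) ((hτu t htT).2)).2
          have step1 : ∫ ω in Dset t, G ω ∂μ = ∫ ω in Dset t, WS t ω ∂μ := by
            refine setIntegral_congr_ae (hDm' t) ?_
            filter_upwards [hbefore, hVW, heS] with ω hbef hvw hs hmem
            obtain ⟨h1, h2⟩ := hmem
            have h3 : ¬ (τd ω ≤ ρ τd ω) := by omega
            show (if τd ω ≤ ρ τd ω then W1 (τd ω) ω else W2 (ρ τd ω) ω) = WS t ω
            rw [if_neg h3, h1]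
            have hv1 : V1 t ω < V2 t ω := hbef t h2
            have hv2 : V2 t ω = max (S t ω) (V1 t ω) := hV2 t htlt ω
            have hSgt : V1 t ω ≤ S t ω := by
              by_contra hcon
              push_neg at hcon
              rw [hv2, max_eq_right hcon.le] at hv1
              exact lt_irrefl _ hv1
            have hmax : max (S t ω) (V1 t ω) = S t ω := max_eq_left hSgt
            have hW2t : W2 t ω = max (WS t ω) (W1 t ω) := by
              rw [hW2def]; simp [htlt]
            rw [hW2t, ← hs, ← (hvw t htT).1, hmax]
          have step2 : ∫ ω in Dset t, WS t ω ∂μ =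
              ∫ ω in Dset t, (μ[fun ω => U t (τu t ω) ω | ℱ t]) ω ∂μ := by
            refine setIntegral_congr_ae (hDm' t) ?_
            filter_upwards [heS, hτuopt t htlt] with ω h1 h2 _
            rw [← h1, h2]
          have step3 : ∫ ω in Dset t, (μ[fun ω => U t (τu t ω) ω | ℱ t]) ω ∂μ =
              ∫ ω in Dset t, U t (τu t ω) ω ∂μ :=
            setIntegral_condExp (ℱ.le t) hUτuint (hDm t)
          have step4 : ∫ ω in Dset t, U t (τu t ω) ω ∂μ = ∫ ω in Dset t, f ω ∂μ := by
            refine setIntegral_congr_fun (hDm' t) fun ω hω => ?_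
            obtain ⟨h1, h2⟩ := hω
            have h3 : ρ τd ω < τd ω := by omega
            obtain ⟨h4, h5⟩ := P2 ω h3
            show U t (τu t ω) ω = U (ρ τs ω) (τs ω) ω
            rw [h5, h4, h1]
          rw [step1, step2, step3, step4]
        · have hDempty : Dset t = (∅ : Set Ω) := by
            ext ω
            simp only [hDdef, Set.mem_setOf_eq, Set.mem_empty_iff_false, iff_false, not_and]
            intro h1
            have := hτdT ω
            omega
          rw [hDempty]
          simp
      linarith
    exact ⟨hτsmem, le_trans hVleG (le_trans hmain (le_of_eq rfl))⟩
  have hbddAbove : ∀ ρ : (Ω → ℕ) → Ω → ℕ, TypeII ρ →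
      BddAbove (Set.range fun τ : 𝒯 => ∫ ω, U (ρ τ.1 ω) (τ.1 ω) ω ∂μ) := by
    intro ρ hρ
    obtain ⟨hmap, _⟩ := (hTypeII ρ).1 hρ
    refine ⟨C, ?_⟩
    rintro x ⟨⟨τ, hτmem⟩, rfl⟩
    have hτmem' := hτmem
    rw [h𝒯] at hτmem'
    obtain ⟨hτst, hτT⟩ := hτmem'
    have hρτ := hmap τ hτmem
    rw [h𝒯] at hρτ
    obtain ⟨hρτst, hρτT⟩ := hρτ
    have hint := (U_comp_integrable (μ := μ) hUmeas hC (stopping_measurable hρτst)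
      (stopping_measurable hτst) hρτT hτT).2
    have h1 : ∫ ω, U (ρ τ ω) (τ ω) ω ∂μ ≤ ∫ _ : Ω, C ∂μ :=
      integral_mono_ae hint (integrable_const _)
        (Eventually.of_forall fun ω => (abs_le.1 (hC _ _ ω)).2)
    simpa using h1
  refine ⟨fun ρ hρ τs hτs => ⟨(key ρ hρ τs hτs).2, ?_⟩, ?_⟩
  · exact le_ciSup (hbddAbove ρ hρ) (⟨τs, (key ρ hρ τs hτs).1⟩ : 𝒯)
  · haveI : Nonempty {ρ : (Ω → ℕ) → Ω → ℕ // TypeII ρ} :=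
      ⟨⟨id, (hTypeII id).2 ⟨fun σ h => h, fun σ₁ _ σ₂ _ ω => Or.inr le_rfl⟩⟩⟩
    refine le_ciInf ?_
    rintro ⟨ρ, hρ⟩
    obtain ⟨hmem, hle⟩ := key ρ hρ
      (fun ω => if τd ω ≤ ρ τd ω then τd ω else τu (ρ τd ω) ω) (fun ω => rfl)
    exact le_trans hle (le_ciSup (hbddAbove ρ hρ) (⟨_, hmem⟩ : 𝒯))
end
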